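/- arXiv:2412.11708 — 2 statements merged into one kernel-verified Lean document; each statement's English description precedes it below -/
import Mathlib

section
/- Let S be a finite set with |S| ≥ 3 and let 𝒫 be a family of pairwise distinct, pairwise compatible 3-partitions of S. Then |𝒫| ≤ |S| − 2. -/
/-- A 3-partition of a finite set `S`: three pairwise distinct nonempty parts
(a `Finset` of parts of cardinality 3), pairwise disjoint, whose union is `S`. -/
def IsThreePartition {α : Type*} [DecidableEq α] (S : Finset α)
    (P : Finset (Finset α)) : Prop :=
  P.card = 3 ∧ (∀ A ∈ P, A.Nonempty) ∧
    (∀ A ∈ P, ∀ B ∈ P, A ≠ B → Disjoint A B) ∧ P.sup id = S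

/-- Two 3-partitions are compatible: some part of `P` contains the union of two of the
three parts of `Q` (equivalently, with the roles of `P` and `Q` exchanged). -/
def CompatiblePartitions {α : Type*} [DecidableEq α]
    (P Q : Finset (Finset α)) : Prop :=
  ∃ A ∈ P, ∃ B ∈ Q, ∀ C ∈ Q, C ≠ B → C ⊆ A

section Aux

variable {α : Type*} [DecidableEq α]

lemma comp_iff_union {S : Finset α} {Q : Finset (Finset α)} (hq : IsThreePartition S Q)
    (P : Finset (Finset α)) :
    CompatiblePartitions P Q ↔ ∃ A ∈ P, ∃ B ∈ Q, S ⊆ A ∪ B := by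
  obtain ⟨-, -, hdisj, hsup⟩ := hq
  constructor
  · rintro ⟨A, hA, B, hB, h⟩
    refine ⟨A, hA, B, hB, fun x hx => ?_⟩
    rw [← hsup, Finset.mem_sup] at hx
    obtain ⟨C, hC, hxC⟩ := hx
    by_cases hCB : C = B
    · exact Finset.mem_union_right _ (hCB ▸ hxC)
    · exact Finset.mem_union_left _ (h C hC hCB hxC)
  · rintro ⟨A, hA, B, hB, h⟩
    refine ⟨A, hA, B, hB, fun C hC hCB x hxC => ?_⟩
    have hxS : x ∈ S := by
      rw [← hsup]; exact Finset.mem_sup.2 ⟨C, hC, hxC⟩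
    rcases Finset.mem_union.1 (h hxS) with h1 | h1
    · exact h1
    · exact absurd h1 (Finset.disjoint_left.1 (hdisj C hC B hB hCB) hxC)

/-- The key contraction step: a family of 3-partitions of `S`, each having two parts
inside `A`, pairwise with a covering pair, transfers to an equinumerous compatible
family of 3-partitions of `insert star A`. -/
lemma step_lemma {S A : Finset α} {G : Finset (Finset (Finset α))}
    (star : α) (hstar : star ∈ S) (hstarA : star ∉ A)
    (hGpart : ∀ Q ∈ G, IsThreePartition S Q)
    (hGbig : ∀ Q ∈ G, ∃ B ∈ Q, S ⊆ A ∪ B)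
    (hGcomp : ∀ P ∈ G, ∀ Q ∈ G, P ≠ Q → ∃ X ∈ P, ∃ Y ∈ Q, S ⊆ X ∪ Y) :
    ∃ G' : Finset (Finset (Finset α)),
      G'.card = G.card ∧
      (∀ Q ∈ G', IsThreePartition (insert star A) Q) ∧
      (∀ P ∈ G', ∀ Q ∈ G', P ≠ Q → CompatiblePartitions P Q) ∧
      (G.Nonempty → 2 ≤ A.card) := by
  set S' : Finset α := insert star A with hS'
  set sml : Finset (Finset α) → Finset (Finset α) :=
    fun Q => Q.filter (fun C => C ⊆ A) with hsml
  set φ : Finset (Finset α) → Finset (Finset α) :=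
    fun Q => insert (S' \ (sml Q).sup id) (sml Q) with hφ
  have hnSA : ¬ S ⊆ A := fun h => hstarA (h hstar)
  -- key structural facts per member
  have key : ∀ Q ∈ G, ∃ B ∈ Q, ¬ B ⊆ A ∧ sml Q = Q.erase B ∧
      (sml Q).sup id = S \ B ∧ S ⊆ A ∪ B := by
    intro Q hQ
    obtain ⟨B, hB, hSB⟩ := hGbig Q hQ
    obtain ⟨hc, hne, hdisj, hsup⟩ := hGpart Q hQ
    have hBA : ¬ B ⊆ A := by
      intro h
      exact hnSA (fun x hx => by
        rcases Finset.mem_union.1 (hSB hx) with h1 | h1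
        · exact h1
        · exact h h1)
    have hsub : ∀ C ∈ Q, C ≠ B → C ⊆ A := by
      intro C hC hCB x hx
      have hxS : x ∈ S := by
        rw [← hsup]; exact Finset.mem_sup.2 ⟨C, hC, hx⟩
      rcases Finset.mem_union.1 (hSB hxS) with h1 | h1
      · exact h1
      · exact absurd h1 (Finset.disjoint_left.1 (hdisj C hC B hB hCB) hx)
    have hfil : sml Q = Q.erase B := by
      ext C
      simp only [hsml, Finset.mem_filter, Finset.mem_erase]
      constructor
      · rintro ⟨hC, hCA⟩
        exact ⟨fun h => hBA (h ▸ hCA), hC⟩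
      · rintro ⟨hCB, hC⟩
        exact ⟨hC, hsub C hC hCB⟩
    refine ⟨B, hB, hBA, hfil, ?_, hSB⟩
    rw [hfil]
    ext x
    simp only [Finset.mem_sup, Finset.mem_sdiff, Finset.mem_erase, id]
    constructor
    · rintro ⟨C, ⟨hCB, hC⟩, hx⟩
      refine ⟨?_, fun hxB => Finset.disjoint_left.1 (hdisj C hC B hB hCB) hx hxB⟩
      rw [← hsup]; exact Finset.mem_sup.2 ⟨C, hC, hx⟩
    · rintro ⟨hxS, hxB⟩
      rw [← hsup, Finset.mem_sup] at hxS
      obtain ⟨C, hC, hx⟩ := hxS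
      exact ⟨C, ⟨fun h => hxB (h ▸ hx), hC⟩, hx⟩
  have hsml_sub : ∀ Q, ∀ C ∈ sml Q, C ⊆ A := by
    intro Q C hC
    exact (Finset.mem_filter.1 hC).2
  have hsml_mem : ∀ Q, ∀ C ∈ sml Q, C ∈ Q := by
    intro Q C hC
    exact (Finset.mem_filter.1 hC).1
  have hsup_sub : ∀ Q, (sml Q).sup id ⊆ A := by
    intro Q
    exact Finset.sup_le (fun C hC => hsml_sub Q C hC)
  have hstar_not_sup : ∀ Q, star ∉ (sml Q).sup id := fun Q h => hstarA (hsup_sub Q h)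
  have hstarS' : star ∈ S' := Finset.mem_insert_self _ _
  have hstarR : ∀ Q, star ∈ S' \ (sml Q).sup id :=
    fun Q => Finset.mem_sdiff.2 ⟨hstarS', hstar_not_sup Q⟩
  have hR_notMem : ∀ Q, S' \ (sml Q).sup id ∉ sml Q := by
    intro Q h
    exact hstarA (hsml_sub Q _ h (hstarR Q))
  -- each image is a 3-partition of S'
  have keypart : ∀ Q ∈ G, IsThreePartition S' (φ Q) := by
    intro Q hQ
    obtain ⟨B, hB, hBA, hfil, hsupf, hSB⟩ := key Q hQ
    obtain ⟨hc, hne, hdisj, hsup⟩ := hGpart Q hQ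
    have hcard2 : (sml Q).card = 2 := by
      rw [hfil, Finset.card_erase_of_mem hB, hc]
    refine ⟨?_, ?_, ?_, ?_⟩
    · rw [hφ]
      simp only [Finset.card_insert_of_notMem (hR_notMem Q), hcard2]
    · intro C hC
      rcases Finset.mem_insert.1 hC with h | h
      · exact ⟨star, h ▸ hstarR Q⟩
      · exact hne C (hsml_mem Q C h)
    · intro C hC D hD hCD
      rcases Finset.mem_insert.1 hC with h1 | h1 <;> rcases Finset.mem_insert.1 hD with h2 | h2
      · exact absurd (h1.trans h2.symm) hCD
      · subst h1
        exact (Finset.sdiff_disjoint).mono_right (Finset.le_sup (f := id) h2)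
      · subst h2
        exact ((Finset.sdiff_disjoint).mono_right (Finset.le_sup (f := id) h1)).symm
      · exact hdisj C (hsml_mem Q C h1) D (hsml_mem Q D h2) hCD
    · rw [hφ]
      simp only [Finset.sup_insert, id]
      exact sdiff_sup_cancel (Finset.le_iff_subset.2 ((hsup_sub Q).trans (Finset.subset_insert _ _)))
  -- injectivity
  have keyinj : ∀ Q ∈ G, ∀ Q' ∈ G, φ Q = φ Q' → Q = Q' := by
    intro Q hQ Q' hQ' heq
    obtain ⟨B, hB, hBA, hfil, hsupf, hSB⟩ := key Q hQ
    obtain ⟨B', hB', hBA', hfil', hsupf', hSB'⟩ := key Q' hQ'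
    have hs : ∀ R : Finset (Finset α), (φ R).filter (fun C => star ∉ C) = sml R := by
      intro R
      rw [hφ]
      simp only
      rw [Finset.filter_insert]
      have hni : ¬ star ∉ S' \ (sml R).sup id := fun h => h (hstarR R)
      rw [if_neg hni]
      apply Finset.filter_eq_self.2
      intro C hC h
      exact hstarA (hsml_sub R C hC h)
    have hsml_eq : sml Q = sml Q' := by rw [← hs Q, ← hs Q', heq]
    have hBS : B ⊆ S := by
      obtain ⟨-, -, -, hsup⟩ := hGpart Q hQ
      rw [← hsup]; exact Finset.le_sup (f := id) hB
    have hBS' : B' ⊆ S := by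
      obtain ⟨-, -, -, hsup⟩ := hGpart Q' hQ'
      rw [← hsup]; exact Finset.le_sup (f := id) hB'
    have h1 : B = S \ (sml Q).sup id := by
      rw [hsupf, Finset.sdiff_sdiff_self_left, Finset.inter_eq_right.2 hBS]
    have h2 : B' = S \ (sml Q').sup id := by
      rw [hsupf', Finset.sdiff_sdiff_self_left, Finset.inter_eq_right.2 hBS']
    have hBeq : B = B' := by rw [h1, h2, hsml_eq]
    have e1 : Q = insert B (sml Q) := by rw [hfil, Finset.insert_erase hB]
    have e2 : Q' = insert B' (sml Q') := by rw [hfil', Finset.insert_erase hB']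
    rw [e1, e2, hBeq, hsml_eq]
  -- compatibility of images
  have keycomp : ∀ Q ∈ G, ∀ Q' ∈ G, Q ≠ Q' → CompatiblePartitions (φ Q) (φ Q') := by
    intro Q hQ Q' hQ' hne
    rw [comp_iff_union (keypart Q' hQ')]
    obtain ⟨X, hX, Y, hY, hXY⟩ := hGcomp Q hQ Q' hQ' hne
    obtain ⟨B, hB, hBA, hfil, hsupf, hSB⟩ := key Q hQ
    obtain ⟨B', hB', hBA', hfil', hsupf', hSB'⟩ := key Q' hQ'
    by_cases hXB : X = B <;> by_cases hYB : Y = B'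
    · -- both big: use the two remainder parts
      rw [hXB, hYB] at hXY
      refine ⟨S' \ (sml Q).sup id, Finset.mem_insert_self _ _,
        S' \ (sml Q').sup id, Finset.mem_insert_self _ _, fun z hz => ?_⟩
      by_cases hz1 : z ∈ (sml Q).sup id
      · rw [hsupf, Finset.mem_sdiff] at hz1
        have hzB' : z ∈ B' := by
          rcases Finset.mem_union.1 (hXY hz1.1) with h | h
          · exact absurd h hz1.2
          · exact h
        refine Finset.mem_union_right _ (Finset.mem_sdiff.2 ⟨hz, ?_⟩)
        rw [hsupf', Finset.mem_sdiff]
        exact fun h => h.2 hzB'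
      · exact Finset.mem_union_left _ (Finset.mem_sdiff.2 ⟨hz, hz1⟩)
    · -- X big, Y small
      have hYs : Y ∈ sml Q' := by
        rw [hfil', Finset.mem_erase]; exact ⟨hYB, hY⟩
      rw [hXB] at hXY
      refine ⟨S' \ (sml Q).sup id, Finset.mem_insert_self _ _,
        Y, Finset.mem_insert_of_mem hYs, fun z hz => ?_⟩
      by_cases hz1 : z ∈ (sml Q).sup id
      · rw [hsupf, Finset.mem_sdiff] at hz1
        rcases Finset.mem_union.1 (hXY hz1.1) with h | h
        · exact absurd h hz1.2
        · exact Finset.mem_union_right _ h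
      · exact Finset.mem_union_left _ (Finset.mem_sdiff.2 ⟨hz, hz1⟩)
    · -- X small, Y big
      have hXs : X ∈ sml Q := by
        rw [hfil, Finset.mem_erase]; exact ⟨hXB, hX⟩
      rw [hYB] at hXY
      refine ⟨X, Finset.mem_insert_of_mem hXs,
        S' \ (sml Q').sup id, Finset.mem_insert_self _ _, fun z hz => ?_⟩
      by_cases hz1 : z ∈ (sml Q').sup id
      · rw [hsupf', Finset.mem_sdiff] at hz1
        rcases Finset.mem_union.1 (hXY hz1.1) with h | h
        · exact Finset.mem_union_left _ h
        · exact absurd h hz1.2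
      · exact Finset.mem_union_right _ (Finset.mem_sdiff.2 ⟨hz, hz1⟩)
    · -- both small: impossible
      exfalso
      have hXs : X ⊆ A := by
        have : X ∈ sml Q := by rw [hfil, Finset.mem_erase]; exact ⟨hXB, hX⟩
        exact hsml_sub Q X this
      have hYs : Y ⊆ A := by
        have : Y ∈ sml Q' := by rw [hfil', Finset.mem_erase]; exact ⟨hYB, hY⟩
        exact hsml_sub Q' Y this
      rcases Finset.mem_union.1 (hXY hstar) with h | h
      · exact hstarA (hXs h)
      · exact hstarA (hYs h)
  refine ⟨G.image φ, Finset.card_image_of_injOn keyinj, ?_, ?_, ?_⟩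
  · intro R hR
    obtain ⟨Q, hQ, rfl⟩ := Finset.mem_image.1 hR
    exact keypart Q hQ
  · intro R1 hR1 R2 hR2 hne
    obtain ⟨Q1, hQ1, rfl⟩ := Finset.mem_image.1 hR1
    obtain ⟨Q2, hQ2, rfl⟩ := Finset.mem_image.1 hR2
    exact keycomp Q1 hQ1 Q2 hQ2 (fun h => hne (h ▸ rfl))
  · rintro ⟨Q, hQ⟩
    obtain ⟨B, hB, hBA, hfil, hsupf, hSB⟩ := key Q hQ
    obtain ⟨hc, hne, hdisj, hsup⟩ := hGpart Q hQ
    have hcard2 : (sml Q).card = 2 := by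
      rw [hfil, Finset.card_erase_of_mem hB, hc]
    obtain ⟨C, hC, D, hD, hCD⟩ := Finset.one_lt_card.1 (by omega : 1 < (sml Q).card)
    have hdCD : Disjoint C D := hdisj C (hsml_mem Q C hC) D (hsml_mem Q D hD) hCD
    have : C ∪ D ⊆ A := Finset.union_subset (hsml_sub Q C hC) (hsml_sub Q D hD)
    have hcu : (C ∪ D).card = C.card + D.card := Finset.card_union_of_disjoint hdCD
    have h1 : 1 ≤ C.card := Finset.card_pos.2 (hne C (hsml_mem Q C hC))
    have h2 : 1 ≤ D.card := Finset.card_pos.2 (hne D (hsml_mem Q D hD))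
    have := Finset.card_le_card this
    omega

end Aux

/-- Grimmett, Lemma 8.5: a family of pairwise distinct, pairwise
compatible 3-partitions of a finite set `S` with `|S| ≥ 3` has at most `|S| − 2`
members. -/
theorem compatible_three_partitions_card_le {α : Type*} [DecidableEq α]
    (S : Finset α) (hS : 3 ≤ S.card)
    (Fam : Finset (Finset (Finset α)))
    (hpart : ∀ P ∈ Fam, IsThreePartition S P)
    (hcomp : ∀ P ∈ Fam, ∀ Q ∈ Fam, P ≠ Q → CompatiblePartitions P Q) :
    Fam.card ≤ S.card - 2 := by
  classical
  -- strong induction on S.card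
  suffices H : ∀ n : ℕ, ∀ S : Finset α, S.card = n → 3 ≤ S.card →
      ∀ Fam : Finset (Finset (Finset α)), (∀ P ∈ Fam, IsThreePartition S P) →
      (∀ P ∈ Fam, ∀ Q ∈ Fam, P ≠ Q → CompatiblePartitions P Q) →
      Fam.card ≤ S.card - 2 by
    exact H S.card S rfl hS Fam hpart hcomp
  intro n
  induction n using Nat.strong_induction_on with
  | _ n ih =>
  rintro S rfl hS Fam hpart hcomp
  by_cases hsmall : Fam.card ≤ 1
  · omega
  push_neg at hsmall
  have hFamne : Fam.Nonempty := Finset.card_pos.1 (by omega)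
  obtain ⟨P₀, hP₀⟩ := hFamne
  obtain ⟨hc₀, hne₀, hdisj₀, hsup₀⟩ := hpart P₀ hP₀
  set FamA : Finset α → Finset (Finset (Finset α)) :=
    fun A => (Fam.erase P₀).filter (fun Q => ∃ B ∈ Q, S ⊆ A ∪ B) with hFamA
  have cover : Fam.erase P₀ ⊆ P₀.biUnion FamA := by
    intro Q hQ
    have hQF : Q ∈ Fam := Finset.mem_of_mem_erase hQ
    have hQne : P₀ ≠ Q := fun h => (Finset.mem_erase.1 hQ).1 h.symm
    have := (comp_iff_union (hpart Q hQF) P₀).1 (hcomp P₀ hP₀ Q hQF hQne)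
    obtain ⟨A, hA, B, hB, hAB⟩ := this
    exact Finset.mem_biUnion.2 ⟨A, hA, Finset.mem_filter.2 ⟨hQ, B, hB, hAB⟩⟩
  -- bound each FamA A
  have bound : ∀ A ∈ P₀, (FamA A).card ≤ A.card - 1 := by
    intro A hA
    rcases Finset.eq_empty_or_nonempty (FamA A) with hemp | hnemp
    · rw [hemp]; simp
    -- find star ∈ S \ A
    have hA2 : (P₀.erase A).Nonempty := by
      rw [← Finset.card_pos, Finset.card_erase_of_mem hA, hc₀]; omega
    obtain ⟨A', hA'⟩ := hA2
    have hA'mem : A' ∈ P₀ := Finset.mem_of_mem_erase hA'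
    have hA'ne : A' ≠ A := (Finset.mem_erase.1 hA').1
    obtain ⟨star, hstarA'⟩ := hne₀ A' hA'mem
    have hstarS : star ∈ S := by
      rw [← hsup₀]; exact Finset.mem_sup.2 ⟨A', hA'mem, hstarA'⟩
    have hstarA : star ∉ A :=
      fun h => Finset.disjoint_left.1 (hdisj₀ A' hA'mem A hA hA'ne) hstarA' h
    -- apply step lemma
    have hGpart : ∀ Q ∈ FamA A, IsThreePartition S Q := by
      intro Q hQ
      exact hpart Q (Finset.mem_of_mem_erase (Finset.mem_filter.1 hQ).1)
    have hGbig : ∀ Q ∈ FamA A, ∃ B ∈ Q, S ⊆ A ∪ B := by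
      intro Q hQ
      exact (Finset.mem_filter.1 hQ).2
    have hGcomp : ∀ P ∈ FamA A, ∀ Q ∈ FamA A, P ≠ Q →
        ∃ X ∈ P, ∃ Y ∈ Q, S ⊆ X ∪ Y := by
      intro P hP Q hQ hPQ
      have hPF : P ∈ Fam := Finset.mem_of_mem_erase (Finset.mem_filter.1 hP).1
      have hQF : Q ∈ Fam := Finset.mem_of_mem_erase (Finset.mem_filter.1 hQ).1
      exact (comp_iff_union (hpart Q hQF) P).1 (hcomp P hPF Q hQF hPQ)
    obtain ⟨G', hcard', hpart', hcomp', hA2card⟩ :=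
      step_lemma star hstarS hstarA hGpart hGbig hGcomp
    have hAcard : 2 ≤ A.card := hA2card hnemp
    have hS'card : (insert star A).card = A.card + 1 :=
      Finset.card_insert_of_notMem hstarA
    -- S.card ≥ A.card + 2
    have hsum : ∑ X ∈ P₀, X.card = S.card := by
      rw [← hsup₀, Finset.sup_eq_biUnion, Finset.card_biUnion]
      · rfl
      · intro x hx y hy hxy
        exact hdisj₀ x hx y hy hxy
    have hrest : 2 ≤ ∑ X ∈ P₀.erase A, X.card := by
      have h1 : (P₀.erase A).card = 2 := by
        rw [Finset.card_erase_of_mem hA, hc₀]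
      calc 2 = ∑ _X ∈ P₀.erase A, 1 := by rw [Finset.sum_const, h1]; simp
        _ ≤ ∑ X ∈ P₀.erase A, X.card := by
            apply Finset.sum_le_sum
            intro X hX
            exact Finset.card_pos.2 (hne₀ X (Finset.mem_of_mem_erase hX))
    have hsplit : ∑ X ∈ P₀, X.card = A.card + ∑ X ∈ P₀.erase A, X.card := by
      rw [← Finset.add_sum_erase _ _ hA]
    have hSA : A.card + 2 ≤ S.card := by omega
    have hlt : (insert star A).card < S.card := by omega
    have h3 : 3 ≤ (insert star A).card := by omega
    have := ih (insert star A).card hlt (insert star A) rfl h3 G' hpart' hcomp'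
    omega
  -- put it together
  have hcover_card : (Fam.erase P₀).card ≤ ∑ A ∈ P₀, (FamA A).card :=
    le_trans (Finset.card_le_card cover) (Finset.card_biUnion_le)
  have hsum_bound : ∑ A ∈ P₀, (FamA A).card ≤ ∑ A ∈ P₀, (A.card - 1) :=
    Finset.sum_le_sum bound
  have hsum_eq : ∑ A ∈ P₀, (A.card - 1) + 3 = ∑ A ∈ P₀, A.card := by
    have : ∑ A ∈ P₀, (A.card - 1) + ∑ _A ∈ P₀, 1 = ∑ A ∈ P₀, (A.card - 1 + 1) :=
      (Finset.sum_add_distrib).symm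
    rw [Finset.sum_const, hc₀] at this
    simp only [smul_eq_mul, mul_one] at this
    rw [this]
    apply Finset.sum_congr rfl
    intro A hA
    have := Finset.card_pos.2 (hne₀ A hA)
    omega
  have hsum : ∑ X ∈ P₀, X.card = S.card := by
    rw [← hsup₀, Finset.sup_eq_biUnion, Finset.card_biUnion]
    · rfl
    · intro x hx y hy hxy
      exact hdisj₀ x hx y hy hxy
  have herase : (Fam.erase P₀).card + 1 = Fam.card :=
    Finset.card_erase_add_one hP₀
  omega
end

section
/- For every dimer configuration m on the hexagonal lattice there exists a unique function h_m : F(ℍ) → ℤ with h_m(f₀) = 0 such that for all adjacent faces f, g with common side e: h_m(g) − h_m(f) = 1 − 3·1_{e ∈ m} if the vertex (1/√3)(f·e^{iπ/6} + g·e^{−iπ/6}) is black, and h_m(g) − h_m(f) = −1 + 3·1_{e ∈ m} if this vertex is white (here faces are identified with the complex numbers at their centers). Moreover the map m ↦ h_m is injective, so dimer configurations are in bijection with their height functions. -/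
/- Common definitions: the hexagonal lattice, fully-packed loop configurations,
   dimer configurations, flips, loops/paths, dual clusters, Gibbs measures. -/

noncomputable section

open Complex MeasureTheory

namespace HexPaper

/-- `ω = e^{iπ/3}`. -/
def hexω : ℂ := Complex.exp (Complex.I * Real.pi / 3)

/-- Centers of the faces of the hexagonal lattice. -/
def HexFaces : Set ℂ := {z | ∃ n m : ℤ, z = (n : ℂ) + (m : ℂ) * hexω}

/-- White vertices. -/
def WV : Set ℂ := {z | ∃ n m : ℤ, z = ((n : ℂ) + 1/3) + ((m : ℂ) + 1/3) * hexω}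

/-- Black vertices. -/
def BV : Set ℂ := {z | ∃ n m : ℤ, z = ((n : ℂ) - 1/3) + ((m : ℂ) + 2/3) * hexω}

/-- Vertices of the hexagonal lattice. -/
def HexVerts : Set ℂ := WV ∪ BV

/-- Edges of the hexagonal lattice: unordered pairs of vertices at distance `1/√3`
(the side length of the unit hexagons). -/
def HexEdges : Set (Sym2 ℂ) :=
  {e | ∃ u v : ℂ, u ∈ HexVerts ∧ v ∈ HexVerts ∧
        ‖u - v‖ = (Real.sqrt 3)⁻¹ ∧ e = s(u, v)}

/-- Degree of the vertex `v` in the edge set `w`. -/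
def degAt (w : Set (Sym2 ℂ)) (v : ℂ) : ℕ := {e ∈ w | v ∈ e}.ncard

/-- Fully-packed loop configuration: every vertex has degree exactly 2. -/
def IsFPLoop (w : Set (Sym2 ℂ)) : Prop :=
  w ⊆ HexEdges ∧ ∀ v ∈ HexVerts, degAt w v = 2

/-- Dimer configuration (perfect matching): every vertex has degree exactly 1. -/
def IsDimer (m : Set (Sym2 ℂ)) : Prop :=
  m ⊆ HexEdges ∧ ∀ v ∈ HexVerts, degAt m v = 1

/-- The six sides of the face centered at `z`: the edges both of whose endpoints are
at distance `1/√3` (the circumradius) from `z`. -/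
def faceSides (z : ℂ) : Set (Sym2 ℂ) :=
  {e ∈ HexEdges | ∀ v ∈ e, ‖v - z‖ = (Real.sqrt 3)⁻¹}

/-- The flip (XOR) operation at the face `f`. -/
def flip (f : ℂ) (E : Set (Sym2 ℂ)) : Set (Sym2 ℂ) :=
  if (E ∩ faceSides f).ncard = 3 then symmDiff E (faceSides f) else E

/-- Composition of flips: `flipSeq [f₁, …, f_k] = flip f_k ∘ ⋯ ∘ flip f₁`. -/
def flipSeq (l : List ℂ) (E : Set (Sym2 ℂ)) : Set (Sym2 ℂ) :=
  l.foldl (fun E f => flip f E) E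

/-- One step of adjacency inside `w`: `e'` is an edge of `w` sharing a vertex with `e`. -/
def adjStep (w : Set (Sym2 ℂ)) (e e' : Sym2 ℂ) : Prop :=
  e' ∈ w ∧ e ≠ e' ∧ ∃ v : ℂ, v ∈ e ∧ v ∈ e'

/-- Connected component (as an edge set) of the edge `e` in the configuration `w`. -/
def component (w : Set (Sym2 ℂ)) (e : Sym2 ℂ) : Set (Sym2 ℂ) :=
  {e' | Relation.ReflTransGen (adjStep w) e e'}

/-- Connected components of a configuration. -/
def ComponentsOf (w : Set (Sym2 ℂ)) : Set (Set (Sym2 ℂ)) :=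
  {C | ∃ e ∈ w, C = component w e}

/-- Loops of `w`: finite connected components. -/
def LoopsOf (w : Set (Sym2 ℂ)) : Set (Set (Sym2 ℂ)) :=
  {C | C ∈ ComponentsOf w ∧ C.Finite}

/-- Bi-infinite paths of `w`: infinite connected components. -/
def PathsOf (w : Set (Sym2 ℂ)) : Set (Set (Sym2 ℂ)) :=
  {C | C ∈ ComponentsOf w ∧ C.Infinite}

/-- The closed segment in the plane drawn by an edge. -/
def edgePoints (e : Sym2 ℂ) : Set ℂ :=
  {z | ∃ u v : ℂ, e = s(u, v) ∧ z ∈ segment ℝ u v}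

/-- The planar curve drawn by a set of edges. -/
def curve (E : Set (Sym2 ℂ)) : Set ℂ := ⋃ e ∈ E, edgePoints e

/-- The edge set `E` surrounds the point `z`: `z` is off the drawn curve and its connected
component in the complement of the curve is bounded (so the curve separates `z` from ∞). -/
def SurroundsPt (E : Set (Sym2 ℂ)) (z : ℂ) : Prop :=
  z ∉ curve E ∧ Bornology.IsBounded (connectedComponentIn (curve E)ᶜ z)

/-- The edge set `E` surrounds the set `X`. -/
def SurroundsSet (E : Set (Sym2 ℂ)) (X : Set ℂ) : Prop := ∀ z ∈ X, SurroundsPt E z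

/-- A (finite) cycle in the hexagonal lattice, as an edge set: nonempty, finite,
connected, and every vertex it touches has degree exactly 2. -/
def IsCycleSet (Γ : Set (Sym2 ℂ)) : Prop :=
  Γ ⊆ HexEdges ∧ Γ.Finite ∧ Γ.Nonempty ∧ (∀ e ∈ Γ, component Γ e = Γ) ∧
    ∀ v : ℂ, (∃ e ∈ Γ, v ∈ e) → degAt Γ v = 2

/-- Two faces are adjacent when their centers are at distance 1. -/
def facesAdj (f g : ℂ) : Prop :=
  f ∈ HexFaces ∧ g ∈ HexFaces ∧ ‖f - g‖ = 1

/-- One step of the dual configuration `w*`: adjacent faces whose common side is not in `w`. -/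
def dualStep (w : Set (Sym2 ℂ)) (f g : ℂ) : Prop :=
  facesAdj f g ∧ ∃ e, e ∈ faceSides f ∩ faceSides g ∧ e ∉ w

/-- The dual cluster of the face `f` in the configuration `w`. -/
def dualCluster (w : Set (Sym2 ℂ)) (f : ℂ) : Set ℂ :=
  {g | Relation.ReflTransGen (dualStep w) f g}

/-- All dual clusters of `w`. -/
def DualClusters (w : Set (Sym2 ℂ)) : Set (Set ℂ) :=
  {C | ∃ f ∈ HexFaces, C = dualCluster w f}

/-- Infinite dual clusters of `w`. -/
def InfDualClusters (w : Set (Sym2 ℂ)) : Set (Set ℂ) :=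
  {C | C ∈ DualClusters w ∧ C.Infinite}

/-- Two distinct dual clusters are adjacent if they contain two adjacent faces. -/
def clustersAdj (C C' : Set ℂ) : Prop :=
  C ≠ C' ∧ ∃ f ∈ C, ∃ g ∈ C', facesAdj f g

/-- The trifurcation event: four pairwise distinct infinite dual clusters,
three of them adjacent to the remaining one. -/
def Trifurcation (w : Set (Sym2 ℂ)) : Prop :=
  ∃ C₀ C₁ C₂ C₃ : Set ℂ,
    C₀ ∈ InfDualClusters w ∧ C₁ ∈ InfDualClusters w ∧
    C₂ ∈ InfDualClusters w ∧ C₃ ∈ InfDualClusters w ∧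
    C₀ ≠ C₁ ∧ C₀ ≠ C₂ ∧ C₀ ≠ C₃ ∧ C₁ ≠ C₂ ∧ C₁ ≠ C₃ ∧ C₂ ≠ C₃ ∧
    clustersAdj C₁ C₀ ∧ clustersAdj C₂ C₀ ∧ clustersAdj C₃ C₀

/- ### Measure-theoretic notions -/

/-- The σ-algebra on configurations generated by the events `{w | e ∈ w}`. -/
instance : MeasurableSpace (Set (Sym2 ℂ)) :=
  MeasurableSpace.generateFrom {A | ∃ e : Sym2 ℂ, A = {w | e ∈ w}}

/-- Translation of an edge by `t`. -/
def translateEdge (t : ℂ) (e : Sym2 ℂ) : Sym2 ℂ := Sym2.map (· + t) e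

/-- Translation of a configuration by `t`. -/
def translateConfig (t : ℂ) (w : Set (Sym2 ℂ)) : Set (Sym2 ℂ) := translateEdge t '' w

/-- Invariance of a measure under the translations by `1` and by `e^{iπ/3}`. -/
def TransInvariant (μ : Measure (Set (Sym2 ℂ))) : Prop :=
  ∀ t ∈ ({1, hexω} : Set ℂ), ∀ A : Set (Set (Sym2 ℂ)),
    μ (translateConfig t ⁻¹' A) = μ A

/-- Ergodicity: every translation-invariant event has measure 0 or 1. -/
def ErgodicMeasure (μ : Measure (Set (Sym2 ℂ))) : Prop :=
  ∀ A : Set (Set (Sym2 ℂ)),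
    (∀ t ∈ ({1, hexω} : Set ℂ), translateConfig t ⁻¹' A = A) → μ A = 0 ∨ μ A = 1

/-- Non-frozen loop measure: no edge has all its lattice translates almost surely present. -/
def NonFrozenLoop (μ : Measure (Set (Sym2 ℂ))) : Prop :=
  ¬ ∃ e ∈ HexEdges, ∀ n m : ℤ,
      μ {w | translateEdge ((n : ℂ) + (m : ℂ) * hexω) e ∈ w} = 1

/-- Non-frozen dimer measure: every edge is present with positive probability. -/
def NonFrozenDimer (μ : Measure (Set (Sym2 ℂ))) : Prop :=
  ∀ e ∈ HexEdges, 0 < μ {m | e ∈ m}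

/-- Edges incident to the vertex set `V` (`E_V` in the paper). -/
def edgesIncident (V : Set ℂ) : Set (Sym2 ℂ) := {e ∈ HexEdges | ∃ u ∈ V, u ∈ e}

/-- Boundary edges of the vertex set `V` (`∂E_V` in the paper). -/
def edgesBoundary (V : Set ℂ) : Set (Sym2 ℂ) :=
  {e ∈ HexEdges | (∃ u ∈ V, u ∈ e) ∧ ∃ v : ℂ, v ∈ e ∧ v ∈ HexVerts ∧ v ∉ V}

/-- A local pattern on `E_V` in which every vertex of `V` has degree `d`. -/
def LocalPattern (d : ℕ) (V : Set ℂ) (a : Set (Sym2 ℂ)) : Prop :=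
  a ⊆ edgesIncident V ∧ ∀ v ∈ V, degAt a v = d

/-- An event depending only on the edges outside `E_V`. -/
def DeterminedOutside (V : Set ℂ) (B : Set (Set (Sym2 ℂ))) : Prop :=
  ∀ w w' : Set (Sym2 ℂ),
    (∀ e : Sym2 ℂ, e ∉ edgesIncident V → (e ∈ w ↔ e ∈ w')) → (w ∈ B ↔ w' ∈ B)

/-- The DLR conditions for the uniform specification with vertex degrees `d`:
conditionally on the configuration outside `E_V`, any two compatible local patterns
(same boundary trace, correct degrees) are equally likely. -/
def GibbsDLR (d : ℕ) (μ : Measure (Set (Sym2 ℂ))) : Prop :=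
  ∀ V : Set ℂ, V.Finite → V ⊆ HexVerts →
    ∀ a b : Set (Sym2 ℂ), LocalPattern d V a → LocalPattern d V b →
      a ∩ edgesBoundary V = b ∩ edgesBoundary V →
      ∀ B : Set (Set (Sym2 ℂ)), DeterminedOutside V B →
        μ (B ∩ {w | w ∩ edgesIncident V = a}) = μ (B ∩ {w | w ∩ edgesIncident V = b})

/-- Gibbs measure for the loop `O(1)` model at `x = ∞`. -/
def IsLoopGibbs (μ : Measure (Set (Sym2 ℂ))) : Prop :=
  IsProbabilityMeasure μ ∧ μ {w | IsFPLoop w} = 1 ∧ GibbsDLR 2 μ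

/-- Gibbs measure for the dimer model. -/
def IsDimerGibbs (μ : Measure (Set (Sym2 ℂ))) : Prop :=
  IsProbabilityMeasure μ ∧ μ {m | IsDimer m} = 1 ∧ GibbsDLR 1 μ

/- ### Geometric events used by the swapping lemmas -/

/-- The open hexagon (Voronoi cell) of the face centered at `f`. -/
def faceRegion (f : ℂ) : Set ℂ :=
  {z | ∀ g ∈ HexFaces, g ≠ f → ‖z - f‖ < ‖z - g‖}

/-- The face `f` meets the region `X` (the paper's `f ∈ F(ℍ) ∩ X`). -/
def FaceMeets (f : ℂ) (X : Set ℂ) : Prop := (faceRegion f ∩ X).Nonempty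

/-- The event `L(r,R)`: no loop meeting `B(R)` has a branch in `B(R/2) \ B(r)`;
equivalently, every loop meeting `B(r)` stays inside `B(R/2)`. -/
def EventL (r R : ℝ) (w : Set (Sym2 ℂ)) : Prop :=
  ∀ ℓ ∈ LoopsOf w, (curve ℓ ∩ Metric.ball (0:ℂ) r).Nonempty →
    curve ℓ ⊆ Metric.ball (0:ℂ) (R / 2)

/-- Connected components of `curve γ` inside the closed annulus with radii `r ≤ R'`
crossing from the inner circle to the outer circle: the branches of `γ` in the annulus. -/
def annulusCrossings (γ : Set (Sym2 ℂ)) (r R' : ℝ) : Set (Set ℂ) :=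
  {C | ∃ z ∈ curve γ ∩ (Metric.closedBall (0:ℂ) R' \ Metric.ball (0:ℂ) r),
        C = connectedComponentIn (curve γ ∩ (Metric.closedBall (0:ℂ) R' \ Metric.ball (0:ℂ) r)) z ∧
        (C ∩ Metric.sphere (0:ℂ) r).Nonempty ∧ (C ∩ Metric.sphere (0:ℂ) R').Nonempty}

/-- The event `P(r,R)`: every bi-infinite path of `w` meeting `B(R)` has at most two
branches in `B(R/2) \ B(r)`. -/
def EventP (r R : ℝ) (w : Set (Sym2 ℂ)) : Prop :=
  ∀ γ ∈ PathsOf w, (curve γ ∩ Metric.ball (0:ℂ) R).Nonempty →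
    (annulusCrossings γ r (R / 2)).ncard ≤ 2

/-- The region between two disjoint bi-infinite paths (the paper's `Area(γ₁,γ₂)`):
the points of the complement of the two curves whose connected component has both
curves on its boundary. -/
def Between (γ₁ γ₂ : Set (Sym2 ℂ)) : Set ℂ :=
  {z | z ∉ curve γ₁ ∪ curve γ₂ ∧
       (closure (connectedComponentIn (curve γ₁ ∪ curve γ₂)ᶜ z) ∩ curve γ₁).Nonempty ∧
       (closure (connectedComponentIn (curve γ₁ ∪ curve γ₂)ᶜ z) ∩ curve γ₂).Nonempty}

/-- `γ₁, γ₂` are parallel in `w`: no other bi-infinite path of `w` enters the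
region between them. -/
def Parallel (w γ₁ γ₂ : Set (Sym2 ℂ)) : Prop :=
  γ₁ ≠ γ₂ ∧ ∀ γ ∈ PathsOf w, γ ≠ γ₁ → γ ≠ γ₂ → curve γ ∩ Between γ₁ γ₂ = ∅

/-- `γ₁, γ₂` are glued in `X`: every face meeting `X ∩ Area(γ₁,γ₂)` has a side on
`γ₁` and a side on `γ₂`. -/
def GluedIn (X : Set ℂ) (γ₁ γ₂ : Set (Sym2 ℂ)) : Prop :=
  ∀ f ∈ HexFaces, (faceRegion f ∩ (X ∩ Between γ₁ γ₂)).Nonempty →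
    (faceSides f ∩ γ₁).Nonempty ∧ (faceSides f ∩ γ₂).Nonempty

/-- The path `γ` bounds the dual cluster `C` of `w`. -/
def BoundsCluster (w γ : Set (Sym2 ℂ)) (C : Set ℂ) : Prop :=
  ∃ f ∈ HexFaces, dualCluster w f = C ∧ (faceSides f ∩ γ).Nonempty

/-- The event `G_X`: two bi-infinite paths meeting `X`, not glued in `X`, bounding a
common infinite dual cluster.  (`X = univ` gives `G_∞`, `X = B(r)` gives `G_r`.) -/
def EventG (X : Set ℂ) (w : Set (Sym2 ℂ)) : Prop :=
  ∃ γ₁ ∈ PathsOf w, ∃ γ₂ ∈ PathsOf w, γ₁ ≠ γ₂ ∧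
    (curve γ₁ ∩ X).Nonempty ∧ (curve γ₂ ∩ X).Nonempty ∧
    ¬ GluedIn X γ₁ γ₂ ∧
    ∃ C ∈ InfDualClusters w, BoundsCluster w γ₁ C ∧ BoundsCluster w γ₂ C

/-- The part of `γ` drawn outside the open ball `B(R)`. -/
def outerPart (R : ℝ) (γ : Set (Sym2 ℂ)) : Set (Sym2 ℂ) :=
  {e ∈ γ | edgePoints e ∩ Metric.ball (0:ℂ) R = ∅}

/-- The infinite branches of the bi-infinite path `γ` outside `B(R)`. -/
def infBranches (R : ℝ) (γ : Set (Sym2 ℂ)) : Set (Set (Sym2 ℂ)) :=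
  {C | C ∈ ComponentsOf (outerPart R γ) ∧ C.Infinite}

end HexPaper

namespace HexPaper

open scoped Classical

/-- The defining rule of the Thurston height function of a dimer configuration `m`:
`h f₀ = 0` and across any common side `e` of adjacent faces `f, g`, the increment
`h g − h f` equals `1 − 3·1_{e ∈ m}` or `−1 + 3·1_{e ∈ m}` according to the color of the
vertex `(1/√3)(f·e^{iπ/6} + g·e^{−iπ/6})`. -/
def heightRule (m : Set (Sym2 ℂ)) (h : ℂ → ℤ) : Prop :=
  h 0 = 0 ∧
  ∀ f g : ℂ, f ∈ HexFaces → g ∈ HexFaces → ‖f - g‖ = 1 →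
    ∀ e ∈ faceSides f ∩ faceSides g,
      (((Real.sqrt 3 : ℂ)⁻¹ * (f * Complex.exp (Complex.I * Real.pi / 6) +
          g * Complex.exp (-(Complex.I * Real.pi) / 6)) ∈ BV) →
        h g - h f = 1 - 3 * (if e ∈ m then 1 else 0)) ∧
      (((Real.sqrt 3 : ℂ)⁻¹ * (f * Complex.exp (Complex.I * Real.pi / 6) +
          g * Complex.exp (-(Complex.I * Real.pi) / 6)) ∈ WV) →
        h g - h f = -1 + 3 * (if e ∈ m then 1 else 0))

end HexPaper

namespace HexPaper

open scoped Classical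
/-- ℚ-coordinates for points of the lattice: `Lam p q = p + q√3 i`. -/
def Lam (p q : ℚ) : ℂ := (p : ℂ) + (q : ℂ) * (Real.sqrt 3 : ℂ) * Complex.I

lemma sqrt3_sq : ((Real.sqrt 3 : ℝ) : ℂ) * ((Real.sqrt 3 : ℝ) : ℂ) = 3 := by
  rw [← Complex.ofReal_mul, Real.mul_self_sqrt (by norm_num)]
  norm_num

lemma Lam_re (p q : ℚ) : (Lam p q).re = (p : ℝ) := by
  simp [Lam]

lemma Lam_im (p q : ℚ) : (Lam p q).im = (q : ℝ) * Real.sqrt 3 := by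
  simp [Lam]

lemma Lam_inj {p q p' q' : ℚ} (h : Lam p q = Lam p' q') : p = p' ∧ q = q' := by
  have h1 : (p : ℝ) = p' := by rw [← Lam_re p q, ← Lam_re p' q', h]
  have h2 : (q : ℝ) * Real.sqrt 3 = (q' : ℝ) * Real.sqrt 3 := by
    rw [← Lam_im p q, ← Lam_im p' q', h]
  have h3 : (q : ℝ) = q' := by
    have := Real.sqrt_pos.mpr (by norm_num : (3:ℝ) > 0)
    field_simp at h2; exact_mod_cast h2
  exact ⟨by exact_mod_cast h1, by exact_mod_cast h3⟩

lemma Lam_add (p q p' q' : ℚ) : Lam p q + Lam p' q' = Lam (p + p') (q + q') := by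
  simp [Lam]; push_cast; ring

lemma Lam_sub (p q p' q' : ℚ) : Lam p q - Lam p' q' = Lam (p - p') (q - q') := by
  simp [Lam]; push_cast; ring

lemma Lam_mul (p q p' q' : ℚ) :
    Lam p q * Lam p' q' = Lam (p * p' - 3 * q * q') (p * q' + q * p') := by
  simp only [Lam]; push_cast
  linear_combination ((q:ℂ) * (q':ℂ) * Complex.I ^ 2) * sqrt3_sq +
    (3 * (q:ℂ) * (q':ℂ)) * Complex.I_sq

lemma Lam_normSq (p q : ℚ) : Complex.normSq (Lam p q) = (p : ℝ)^2 + 3 * (q : ℝ)^2 := by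
  rw [Complex.normSq_apply, Lam_re, Lam_im]
  have : Real.sqrt 3 * Real.sqrt 3 = 3 := Real.mul_self_sqrt (by norm_num)
  ring_nf
  nlinarith [this]

lemma abs_Lam_iff (p q : ℚ) (r : ℝ) (hr : 0 ≤ r) :
    ‖Lam p q‖ = r ↔ Complex.normSq (Lam p q) = r ^ 2 := by
  constructor
  · intro h; rw [← Complex.sq_norm, h]
  · intro h
    have h1 : (‖Lam p q‖)^2 = r^2 := by rw [Complex.sq_norm, h]
    have := norm_nonneg (Lam p q)
    nlinarith [h1]

lemma abs_Lam_one_iff (p q : ℚ) :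
    ‖Lam p q‖ = 1 ↔ p^2 + 3*q^2 = 1 := by
  rw [abs_Lam_iff p q 1 (by norm_num), Lam_normSq, one_pow]
  constructor
  · intro h; have : ((p^2 + 3*q^2 : ℚ) : ℝ) = ((1:ℚ):ℝ) := by push_cast; push_cast at h; linarith
    exact_mod_cast this
  · intro h; have : ((p^2 + 3*q^2 : ℚ) : ℝ) = ((1:ℚ):ℝ) := by exact_mod_cast h
    push_cast at this; linarith

lemma abs_Lam_inv_sqrt3_iff (p q : ℚ) :
    ‖Lam p q‖ = (Real.sqrt 3)⁻¹ ↔ p^2 + 3*q^2 = 1/3 := by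
  rw [abs_Lam_iff p q _ (by positivity), Lam_normSq]
  have : ((Real.sqrt 3)⁻¹ : ℝ)^2 = 1/3 := by
    rw [inv_pow, Real.sq_sqrt (by norm_num : (3:ℝ) ≥ 0)]; norm_num
  rw [this]
  constructor
  · intro h; have : ((p^2 + 3*q^2 : ℚ) : ℝ) = ((1/3:ℚ):ℝ) := by push_cast; linarith
    exact_mod_cast this
  · intro h; have : ((p^2 + 3*q^2 : ℚ) : ℝ) = ((1/3:ℚ):ℝ) := by exact_mod_cast h
    push_cast at this; linarith

lemma hexω_eq : hexω = Lam (1/2) (1/2) := by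
  have h1 : Complex.I * (Real.pi : ℂ) / 3 = ((Real.pi / 3 : ℝ) : ℂ) * Complex.I := by
    push_cast; ring
  rw [hexω, h1, Complex.exp_mul_I, ← Complex.ofReal_cos, ← Complex.ofReal_sin,
    Real.cos_pi_div_three, Real.sin_pi_div_three]
  simp only [Lam]
  push_cast
  ring

/-- Face center with integer coordinates. -/
def Fc (n b : ℤ) : ℂ := Lam (n + b/2) (b/2)
/-- White vertex with integer coordinates. -/
def Wv (n b : ℤ) : ℂ := Lam (n + b/2 + 1/2) (b/2 + 1/6)
/-- Black vertex with integer coordinates. -/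
def Bk (n b : ℤ) : ℂ := Lam (n + b/2) (b/2 + 1/3)

lemma mem_HexFaces_iff (z : ℂ) : z ∈ HexFaces ↔ ∃ n b : ℤ, z = Fc n b := by
  unfold HexFaces Fc
  constructor
  · rintro ⟨n, m, rfl⟩
    exact ⟨n, m, by rw [hexω_eq]; simp only [Lam]; push_cast; ring⟩
  · rintro ⟨n, b, rfl⟩
    exact ⟨n, b, by rw [hexω_eq]; simp only [Lam]; push_cast; ring⟩

lemma mem_WV_iff (z : ℂ) : z ∈ WV ↔ ∃ n b : ℤ, z = Wv n b := by
  unfold WV Wv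
  constructor
  · rintro ⟨n, m, rfl⟩
    exact ⟨n, m, by rw [hexω_eq]; simp only [Lam]; push_cast; ring⟩
  · rintro ⟨n, b, rfl⟩
    exact ⟨n, b, by rw [hexω_eq]; simp only [Lam]; push_cast; ring⟩

lemma mem_BV_iff (z : ℂ) : z ∈ BV ↔ ∃ n b : ℤ, z = Bk n b := by
  unfold BV Bk
  constructor
  · rintro ⟨n, m, rfl⟩
    exact ⟨n, m, by rw [hexω_eq]; simp only [Lam]; push_cast; ring⟩
  · rintro ⟨n, b, rfl⟩
    exact ⟨n, b, by rw [hexω_eq]; simp only [Lam]; push_cast; ring⟩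

lemma Fc_mem (n b : ℤ) : Fc n b ∈ HexFaces := (mem_HexFaces_iff _).mpr ⟨n, b, rfl⟩
lemma Wv_mem (n b : ℤ) : Wv n b ∈ WV := (mem_WV_iff _).mpr ⟨n, b, rfl⟩
lemma Bk_mem (n b : ℤ) : Bk n b ∈ BV := (mem_BV_iff _).mpr ⟨n, b, rfl⟩
lemma Wv_mem_verts (n b : ℤ) : Wv n b ∈ HexVerts := Or.inl (Wv_mem n b)
lemma Bk_mem_verts (n b : ℤ) : Bk n b ∈ HexVerts := Or.inr (Bk_mem n b)

lemma WV_disj_BV {z : ℂ} (hw : z ∈ WV) (hb : z ∈ BV) : False := by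
  rw [mem_WV_iff] at hw; rw [mem_BV_iff] at hb
  obtain ⟨n, b, rfl⟩ := hw
  obtain ⟨n', b', he⟩ := hb
  unfold Wv Bk at he
  obtain ⟨h1, h2⟩ := Lam_inj he
  have : (6 : ℚ) * (b/2 + 1/6) = 6 * ((b':ℚ)/2 + 1/3) := by rw [h2]
  have hb2 : 3 * (b : ℚ) + 1 = 3 * b' + 2 := by push_cast at this ⊢; linarith
  have : (3 * b + 1 : ℤ) = 3 * b' + 2 := by exact_mod_cast hb2
  omega

lemma Wv_ne_Bk (n b n' b' : ℤ) : Wv n b ≠ Bk n' b' := by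
  intro h
  exact WV_disj_BV (Wv_mem n b) (h ▸ Bk_mem n' b')

lemma Fc_zero : Fc 0 0 = 0 := by simp [Fc, Lam]

lemma Bk_inj {n b n' b' : ℤ} (h : Bk n b = Bk n' b') : n = n' ∧ b = b' := by
  obtain ⟨h1, h2⟩ := Lam_inj h
  constructor
  · have hb : (b : ℚ) = b' := by linarith
    have hb' : b = b' := by exact_mod_cast hb
    have : (n : ℚ) = n' := by rw [hb] at h1; linarith
    exact_mod_cast this
  · have hb : (b : ℚ) = b' := by linarith
    exact_mod_cast hb

lemma Wv_inj {n b n' b' : ℤ} (h : Wv n b = Wv n' b') : n = n' ∧ b = b' := by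
  obtain ⟨h1, h2⟩ := Lam_inj h
  constructor
  · have hb : (b : ℚ) = b' := by linarith
    have : (n : ℚ) = n' := by rw [hb] at h1; linarith
    exact_mod_cast this
  · have hb : (b : ℚ) = b' := by linarith
    exact_mod_cast hb

lemma Fc_inj {n b n' b' : ℤ} (h : Fc n b = Fc n' b') : n = n' ∧ b = b' := by
  obtain ⟨h1, h2⟩ := Lam_inj h
  constructor
  · have hb : (b : ℚ) = b' := by linarith
    have : (n : ℚ) = n' := by rw [hb] at h1; linarith
    exact_mod_cast this
  · have hb : (b : ℚ) = b' := by linarith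
    exact_mod_cast hb

/-- The vertex selected by the height rule, in coordinates. -/
lemma vertexExpr_eq (P Q P' Q' : ℚ) :
    (Real.sqrt 3 : ℂ)⁻¹ * (Lam P Q * Complex.exp (Complex.I * Real.pi / 6) +
      Lam P' Q' * Complex.exp (-(Complex.I * Real.pi) / 6)) =
    Lam ((P + P' + Q' - Q)/2) ((P - P')/6 + (Q + Q')/2) := by
  have h6 : Complex.exp (Complex.I * Real.pi / 6) =
      ((Real.sqrt 3 : ℝ) : ℂ) / 2 + Complex.I / 2 := by
    have h1 : Complex.I * (Real.pi : ℂ) / 6 = ((Real.pi / 6 : ℝ) : ℂ) * Complex.I := by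
      push_cast; ring
    rw [h1, Complex.exp_mul_I, ← Complex.ofReal_cos, ← Complex.ofReal_sin,
      Real.cos_pi_div_six, Real.sin_pi_div_six]
    push_cast; ring
  have h6' : Complex.exp (-(Complex.I * Real.pi) / 6) =
      ((Real.sqrt 3 : ℝ) : ℂ) / 2 - Complex.I / 2 := by
    have h1 : -(Complex.I * (Real.pi : ℂ)) / 6 = ((-(Real.pi / 6) : ℝ) : ℂ) * Complex.I := by
      push_cast; ring
    rw [h1, Complex.exp_mul_I, ← Complex.ofReal_cos, ← Complex.ofReal_sin,
      Real.cos_neg, Real.sin_neg, Real.cos_pi_div_six, Real.sin_pi_div_six]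
    push_cast; ring
  rw [h6, h6']
  have hs : ((Real.sqrt 3 : ℝ) : ℂ) ≠ 0 := by
    simp only [ne_eq, Complex.ofReal_eq_zero]
    positivity
  rw [inv_mul_eq_iff_eq_mul₀ hs]
  simp only [Lam]
  push_cast
  linear_combination (-Complex.I * (((P:ℂ) - P')/6)) * sqrt3_sq +
    (((Real.sqrt 3 : ℝ) : ℂ) * (((Q:ℂ) - Q')/2)) * Complex.I_sq
/-- The three edge families: `E0 n b` is the east side of face `(n,b)`,
`E1 n b` its north-east side, `E2 n b` its north-west side. -/
def E0 (n b : ℤ) : Sym2 ℂ := s(Bk (n+1) (b-1), Wv n b)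
def E1 (n b : ℤ) : Sym2 ℂ := s(Wv n b, Bk n b)
def E2 (n b : ℤ) : Sym2 ℂ := s(Bk n b, Wv (n-1) b)

lemma vert_coords {u : ℂ} (hu : u ∈ HexVerts) : ∃ p q : ℚ, u = Lam p q := by
  rcases hu with hw | hb
  · obtain ⟨n, b, rfl⟩ := (mem_WV_iff _).mp hw; exact ⟨_, _, rfl⟩
  · obtain ⟨n, b, rfl⟩ := (mem_BV_iff _).mp hb; exact ⟨_, _, rfl⟩

lemma absd (p q p' q' : ℚ) (h : (p - p')^2 + 3*(q - q')^2 = 1/3) :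
    ‖Lam p q - Lam p' q'‖ = (Real.sqrt 3)⁻¹ := by
  rw [Lam_sub, abs_Lam_inv_sqrt3_iff]; exact h

lemma absd1 (p q p' q' : ℚ) (h : (p - p')^2 + 3*(q - q')^2 = 1) :
    ‖Lam p q - Lam p' q'‖ = 1 := by
  rw [Lam_sub, abs_Lam_one_iff]; exact h

/- Adjacency distances -/
lemma adj_E (n b : ℤ) : ‖Fc n b - Fc (n+1) b‖ = 1 := by
  apply absd1; push_cast; ring_nf
lemma adj_NE (n b : ℤ) : ‖Fc n b - Fc n (b+1)‖ = 1 := by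
  apply absd1; push_cast; ring_nf
lemma adj_NW (n b : ℤ) : ‖Fc n b - Fc (n-1) (b+1)‖ = 1 := by
  apply absd1; push_cast; ring_nf

/- Edges are hexagonal edges -/
lemma E0_mem_hexEdges (n b : ℤ) : E0 n b ∈ HexEdges := by
  refine ⟨_, _, Bk_mem_verts _ _, Wv_mem_verts _ _, ?_, rfl⟩
  apply absd; push_cast; ring_nf
lemma E1_mem_hexEdges (n b : ℤ) : E1 n b ∈ HexEdges := by
  refine ⟨_, _, Wv_mem_verts _ _, Bk_mem_verts _ _, ?_, rfl⟩
  apply absd; push_cast; ring_nf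
lemma E2_mem_hexEdges (n b : ℤ) : E2 n b ∈ HexEdges := by
  refine ⟨_, _, Bk_mem_verts _ _, Wv_mem_verts _ _, ?_, rfl⟩
  apply absd; push_cast; ring_nf

/- Membership of the edges in the face sides -/
lemma mem_faceSides_iff (e : Sym2 ℂ) (z : ℂ) :
    e ∈ faceSides z ↔ e ∈ HexEdges ∧ ∀ v ∈ e, ‖v - z‖ = (Real.sqrt 3)⁻¹ :=
  Iff.rfl

lemma pair_mem_faceSides {a c z : ℂ} (h : s(a, c) ∈ HexEdges)
    (ha : ‖a - z‖ = (Real.sqrt 3)⁻¹) (hc : ‖c - z‖ = (Real.sqrt 3)⁻¹) :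
    s(a, c) ∈ faceSides z := by
  refine ⟨h, ?_⟩
  intro v hv
  rcases Sym2.mem_iff.mp hv with rfl | rfl
  · exact ha
  · exact hc

lemma E0_mem_sides (n b : ℤ) :
    E0 n b ∈ faceSides (Fc n b) ∩ faceSides (Fc (n+1) b) := by
  constructor
  · exact pair_mem_faceSides (E0_mem_hexEdges n b)
      (absd _ _ _ _ (by push_cast; ring_nf)) (absd _ _ _ _ (by push_cast; ring_nf))
  · exact pair_mem_faceSides (E0_mem_hexEdges n b)
      (absd _ _ _ _ (by push_cast; ring_nf)) (absd _ _ _ _ (by push_cast; ring_nf))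

lemma E1_mem_sides (n b : ℤ) :
    E1 n b ∈ faceSides (Fc n b) ∩ faceSides (Fc n (b+1)) := by
  constructor
  · exact pair_mem_faceSides (E1_mem_hexEdges n b)
      (absd _ _ _ _ (by push_cast; ring_nf)) (absd _ _ _ _ (by push_cast; ring_nf))
  · exact pair_mem_faceSides (E1_mem_hexEdges n b)
      (absd _ _ _ _ (by push_cast; ring_nf)) (absd _ _ _ _ (by push_cast; ring_nf))

lemma E2_mem_sides (n b : ℤ) :
    E2 n b ∈ faceSides (Fc n b) ∩ faceSides (Fc (n-1) (b+1)) := by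
  constructor
  · exact pair_mem_faceSides (E2_mem_hexEdges n b)
      (absd _ _ _ _ (by push_cast; ring_nf)) (absd _ _ _ _ (by push_cast; ring_nf))
  · exact pair_mem_faceSides (E2_mem_hexEdges n b)
      (absd _ _ _ _ (by push_cast; ring_nf)) (absd _ _ _ _ (by push_cast; ring_nf))
/- Solving the two-circle equations -/
lemma solve0 {x y : ℚ} (h1 : x^2 + 3*y^2 = 1/3) (h2 : (x - 1)^2 + 3*y^2 = 1/3) :
    (x = 1/2 ∧ y = 1/6) ∨ (x = 1/2 ∧ y = -1/6) := by
  have hx : x = 1/2 := by nlinarith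
  have hy : (y - 1/6) * (y + 1/6) = 0 := by nlinarith
  rcases mul_eq_zero.mp hy with h | h
  · exact Or.inl ⟨hx, by linarith⟩
  · exact Or.inr ⟨hx, by linarith⟩

lemma solve1 {x y : ℚ} (h1 : x^2 + 3*y^2 = 1/3) (h2 : (x - 1/2)^2 + 3*(y - 1/2)^2 = 1/3) :
    (x = 1/2 ∧ y = 1/6) ∨ (x = 0 ∧ y = 1/3) := by
  have hx : x = 1 - 3*y := by nlinarith
  have hy : (y - 1/6) * (y - 1/3) = 0 := by nlinarith
  rcases mul_eq_zero.mp hy with h | h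
  · exact Or.inl ⟨by rw [hx]; linarith, by linarith⟩
  · exact Or.inr ⟨by rw [hx]; linarith, by linarith⟩

lemma solve2 {x y : ℚ} (h1 : x^2 + 3*y^2 = 1/3) (h2 : (x + 1/2)^2 + 3*(y - 1/2)^2 = 1/3) :
    (x = -1/2 ∧ y = 1/6) ∨ (x = 0 ∧ y = 1/3) := by
  have hx : x = 3*y - 1 := by nlinarith
  have hy : (y - 1/6) * (y - 1/3) = 0 := by nlinarith
  rcases mul_eq_zero.mp hy with h | h
  · exact Or.inl ⟨by rw [hx]; linarith, by linarith⟩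
  · exact Or.inr ⟨by rw [hx]; linarith, by linarith⟩

/-- Generic lemma: if every lattice point equidistant from `f` and `g` is `A` or `B`,
then the unique common side is `s(A,B)`. -/
lemma sides_unique_of {f g A B : ℂ} (hAB : A ≠ B)
    (hend : ∀ p q : ℚ, ‖Lam p q - f‖ = (Real.sqrt 3)⁻¹ →
      ‖Lam p q - g‖ = (Real.sqrt 3)⁻¹ → Lam p q = A ∨ Lam p q = B)
    {e : Sym2 ℂ} (he : e ∈ faceSides f ∩ faceSides g) : e = s(A, B) := by
  obtain ⟨⟨he1, hP⟩, _, hQ⟩ := he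
  obtain ⟨u, v, hu, hv, huv, rfl⟩ := he1
  obtain ⟨p, q, rfl⟩ := vert_coords hu
  obtain ⟨p', q', rfl⟩ := vert_coords hv
  have hne : Lam p q ≠ Lam p' q' := by
    intro h
    rw [h, sub_self, norm_zero] at huv
    have : (0:ℝ) < (Real.sqrt 3)⁻¹ := by positivity
    linarith [huv ▸ this]
  have hu1 := hP _ (Sym2.mem_mk_left (Lam p q) (Lam p' q'))
  have hu2 := hQ _ (Sym2.mem_mk_left (Lam p q) (Lam p' q'))
  have hv1 := hP _ (Sym2.mem_mk_right (Lam p q) (Lam p' q'))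
  have hv2 := hQ _ (Sym2.mem_mk_right (Lam p q) (Lam p' q'))
  rcases hend p q hu1 hu2 with h | h <;> rcases hend p' q' hv1 hv2 with h' | h'
  · exact absurd (h.trans h'.symm) hne
  · rw [h, h']
  · rw [h, h', Sym2.eq_swap]
  · exact absurd (h.trans h'.symm) hne

lemma endpoint0 {n b : ℤ} (p q : ℚ)
    (h1 : ‖Lam p q - Fc n b‖ = (Real.sqrt 3)⁻¹)
    (h2 : ‖Lam p q - Fc (n+1) b‖ = (Real.sqrt 3)⁻¹) :
    Lam p q = Wv n b ∨ Lam p q = Bk (n+1) (b-1) := by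
  unfold Fc at h1 h2
  rw [Lam_sub, abs_Lam_inv_sqrt3_iff] at h1 h2
  have := solve0 (x := p - (n + b/2)) (y := q - b/2)
    (by linear_combination h1) (by push_cast at h2 ⊢; linear_combination h2)
  rcases this with ⟨hx, hy⟩ | ⟨hx, hy⟩
  · left; unfold Wv; congr 1 <;> [linarith; linarith]
  · right; unfold Bk; congr 1 <;> [skip; skip] <;> push_cast <;> linarith

lemma endpoint1 {n b : ℤ} (p q : ℚ)
    (h1 : ‖Lam p q - Fc n b‖ = (Real.sqrt 3)⁻¹)
    (h2 : ‖Lam p q - Fc n (b+1)‖ = (Real.sqrt 3)⁻¹) :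
    Lam p q = Wv n b ∨ Lam p q = Bk n b := by
  unfold Fc at h1 h2
  rw [Lam_sub, abs_Lam_inv_sqrt3_iff] at h1 h2
  have := solve1 (x := p - (n + b/2)) (y := q - b/2)
    (by linear_combination h1) (by push_cast at h2 ⊢; linear_combination h2)
  rcases this with ⟨hx, hy⟩ | ⟨hx, hy⟩
  · left; unfold Wv; congr 1 <;> linarith
  · right; unfold Bk; congr 1 <;> linarith

lemma endpoint2 {n b : ℤ} (p q : ℚ)
    (h1 : ‖Lam p q - Fc n b‖ = (Real.sqrt 3)⁻¹)
    (h2 : ‖Lam p q - Fc (n-1) (b+1)‖ = (Real.sqrt 3)⁻¹) :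
    Lam p q = Wv (n-1) b ∨ Lam p q = Bk n b := by
  unfold Fc at h1 h2
  rw [Lam_sub, abs_Lam_inv_sqrt3_iff] at h1 h2
  have := solve2 (x := p - (n + b/2)) (y := q - b/2)
    (by linear_combination h1) (by push_cast at h2 ⊢; linear_combination h2)
  rcases this with ⟨hx, hy⟩ | ⟨hx, hy⟩
  · left; unfold Wv; congr 1 <;> push_cast <;> linarith
  · right; unfold Bk; congr 1 <;> linarith

lemma sides_unique0 (n b : ℤ) {e : Sym2 ℂ}
    (he : e ∈ faceSides (Fc n b) ∩ faceSides (Fc (n+1) b)) : e = E0 n b := by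
  have := sides_unique_of (A := Wv n b) (B := Bk (n+1) (b-1))
    (Wv_ne_Bk _ _ _ _) (fun p q h1 h2 => endpoint0 p q h1 h2) he
  rw [this, E0, Sym2.eq_swap]

lemma sides_unique1 (n b : ℤ) {e : Sym2 ℂ}
    (he : e ∈ faceSides (Fc n b) ∩ faceSides (Fc n (b+1))) : e = E1 n b := by
  exact sides_unique_of (A := Wv n b) (B := Bk n b)
    (Wv_ne_Bk _ _ _ _) (fun p q h1 h2 => endpoint1 p q h1 h2) he

lemma sides_unique2 (n b : ℤ) {e : Sym2 ℂ}
    (he : e ∈ faceSides (Fc n b) ∩ faceSides (Fc (n-1) (b+1))) : e = E2 n b := by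
  have := sides_unique_of (A := Wv (n-1) b) (B := Bk n b)
    (Wv_ne_Bk _ _ _ _) (fun p q h1 h2 => endpoint2 p q h1 h2) he
  rw [this, E2, Sym2.eq_swap]
/- Classification of neighbouring vertices -/
lemma ll_far {i j : ℤ} (h : ((i:ℚ) + (j:ℚ)/2)^2 + 3*((j:ℚ)/2)^2 = 1/3) : False := by
  have hz : (3:ℤ) * ((2*i+j)^2 + 3*j^2) = 4 := by
    have : ((3 * ((2*i+j)^2 + 3*j^2) : ℤ) : ℚ) = ((4:ℤ):ℚ) := by push_cast; linear_combination 12*h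
    exact_mod_cast this
  have hdvd : (3:ℤ) ∣ 4 := ⟨(2*i+j)^2 + 3*j^2, hz.symm⟩
  norm_num at hdvd

lemma wb_classify {n b N M : ℤ}
    (h : ‖Wv n b - Bk N M‖ = (Real.sqrt 3)⁻¹) :
    (N = n ∧ M = b) ∨ (N = n + 1 ∧ M = b) ∨ (N = n + 1 ∧ M = b - 1) := by
  unfold Wv Bk at h
  rw [Lam_sub, abs_Lam_inv_sqrt3_iff] at h
  have hz : 3*(2*(n - N) + (b - M) + 1)^2 + (3*(b - M) - 1)^2 = 4 := by
    have : ((3*(2*(n - N) + (b - M) + 1)^2 + (3*(b - M) - 1)^2 : ℤ) : ℚ) = ((4:ℤ):ℚ) := by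
      push_cast; linear_combination 12*h
    exact_mod_cast this
  set i := n - N with hi
  set j := b - M with hj
  have h1 : (3*j - 1)^2 ≤ 4 := by linarith [sq_nonneg (2*i + j + 1)]
  have hj0 : 0 ≤ j := by linarith [h1, sq_nonneg (3*j + 2)]
  have hj1 : j ≤ 1 := by linarith [h1, sq_nonneg (3*j - 4)]
  interval_cases j
  · -- j = 0 : 3*(2i+1)^2 = 3
    have h4 : i * (i + 1) = 0 := by linarith [hz]
    rcases mul_eq_zero.mp h4 with h5 | h5 <;> omega
  · -- j = 1 : (i+1)^2 = 0
    have h4 : (i + 1) * (i + 1) = 0 := by linarith [hz]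
    rcases mul_eq_zero.mp h4 with h5 | h5 <;> omega

lemma white_nbr_pt {n b : ℤ} {z : ℂ} (hz : z ∈ HexVerts)
    (hd : ‖Wv n b - z‖ = (Real.sqrt 3)⁻¹) :
    z = Bk n b ∨ z = Bk (n+1) b ∨ z = Bk (n+1) (b-1) := by
  rcases hz with hw | hb
  · obtain ⟨N, M, rfl⟩ := (mem_WV_iff _).mp hw
    exfalso
    unfold Wv at hd
    rw [Lam_sub, abs_Lam_inv_sqrt3_iff] at hd
    exact ll_far (i := n - N) (j := b - M) (by push_cast at hd ⊢; linear_combination hd)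
  · obtain ⟨N, M, rfl⟩ := (mem_BV_iff _).mp hb
    rcases wb_classify hd with ⟨rfl, rfl⟩ | ⟨h1, h2⟩ | ⟨h1, h2⟩
    · exact Or.inl rfl
    · subst h1; subst h2; exact Or.inr (Or.inl rfl)
    · subst h1; subst h2; exact Or.inr (Or.inr rfl)

lemma black_nbr_pt {n b : ℤ} {z : ℂ} (hz : z ∈ HexVerts)
    (hd : ‖Bk n b - z‖ = (Real.sqrt 3)⁻¹) :
    z = Wv n b ∨ z = Wv (n-1) b ∨ z = Wv (n-1) (b+1) := by
  rcases hz with hw | hb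
  · obtain ⟨N, M, rfl⟩ := (mem_WV_iff _).mp hw
    have hd' : ‖Wv N M - Bk n b‖ = (Real.sqrt 3)⁻¹ := by
      rwa [norm_sub_rev] at hd
    rcases wb_classify hd' with ⟨h1, h2⟩ | ⟨h1, h2⟩ | ⟨h1, h2⟩
    · left; congr 1 <;> omega
    · right; left; congr 1 <;> omega
    · right; right; congr 1 <;> omega
  · obtain ⟨N, M, rfl⟩ := (mem_BV_iff _).mp hb
    exfalso
    unfold Bk at hd
    rw [Lam_sub, abs_Lam_inv_sqrt3_iff] at hd
    exact ll_far (i := n - N) (j := b - M) (by push_cast at hd ⊢; linear_combination hd)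

lemma Wv_mem_E0 (n b : ℤ) : Wv n b ∈ E0 n b := Sym2.mem_mk_right _ _
lemma Wv_mem_E1 (n b : ℤ) : Wv n b ∈ E1 n b := Sym2.mem_mk_left _ _
lemma Wv_mem_E2 (n b : ℤ) : Wv n b ∈ E2 (n+1) b := by
  have : Wv n b = Wv (n+1-1) b := by norm_num
  rw [this, E2]; exact Sym2.mem_mk_right _ _
lemma Bk_mem_E1 (n b : ℤ) : Bk n b ∈ E1 n b := Sym2.mem_mk_right _ _
lemma Bk_mem_E2 (n b : ℤ) : Bk n b ∈ E2 n b := Sym2.mem_mk_left _ _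
lemma Bk_mem_E0 (n b : ℤ) : Bk n b ∈ E0 (n-1) (b+1) := by
  have : Bk n b = Bk (n-1+1) (b+1-1) := by norm_num
  rw [this, E0]; exact Sym2.mem_mk_left _ _

/-- Edges of the lattice containing the white vertex `(n,b)`. -/
lemma white_nbrs {n b : ℤ} {e : Sym2 ℂ} (he : e ∈ HexEdges) (hv : Wv n b ∈ e) :
    e = E1 n b ∨ e = E2 (n+1) b ∨ e = E0 n b := by
  obtain ⟨u, v, hu, hvv, huv, rfl⟩ := he
  rcases Sym2.mem_iff.mp hv with h | h
  · -- Wv = u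
    have hd : ‖Wv n b - v‖ = (Real.sqrt 3)⁻¹ := by rw [h]; exact huv
    rcases white_nbr_pt hvv hd with h' | h' | h'
    · left; rw [← h, h', E1]
    · right; left; rw [← h, h', E2]
      have : Bk (n+1) b = Bk (n+1) b := rfl
      rw [Sym2.eq_swap]
      congr 1
      norm_num
    · right; right; rw [← h, h', E0, Sym2.eq_swap]
  · -- Wv = v
    have hd : ‖Wv n b - u‖ = (Real.sqrt 3)⁻¹ := by
      rw [← h, norm_sub_rev] at huv; exact huv
    rcases white_nbr_pt hu hd with h' | h' | h'
    · left; rw [← h, h', E1, Sym2.eq_swap]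
    · right; left; rw [← h, h', E2]
      congr 1
      norm_num
    · right; right; rw [← h, h', E0]

/-- Edges of the lattice containing the black vertex `(n,b)`. -/
lemma black_nbrs {n b : ℤ} {e : Sym2 ℂ} (he : e ∈ HexEdges) (hv : Bk n b ∈ e) :
    e = E1 n b ∨ e = E2 n b ∨ e = E0 (n-1) (b+1) := by
  obtain ⟨u, v, hu, hvv, huv, rfl⟩ := he
  rcases Sym2.mem_iff.mp hv with h | h
  · have hd : ‖Bk n b - v‖ = (Real.sqrt 3)⁻¹ := by rw [h]; exact huv
    rcases black_nbr_pt hvv hd with h' | h' | h'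
    · left; rw [← h, h', E1, Sym2.eq_swap]
    · right; left; rw [← h, h', E2]
    · right; right; rw [← h, h', E0]
      congr 1 <;> norm_num
  · have hd : ‖Bk n b - u‖ = (Real.sqrt 3)⁻¹ := by
      rw [← h, norm_sub_rev] at huv; exact huv
    rcases black_nbr_pt hu hd with h' | h' | h'
    · left; rw [← h, h', E1]
    · right; left; rw [← h, h', E2, Sym2.eq_swap]
    · right; right; rw [← h, h', E0, Sym2.eq_swap]
      congr 1 <;> norm_num
open scoped Classical

/-- Integer indicator of an edge being present. -/
def ind (m : Set (Sym2 ℂ)) (e : Sym2 ℂ) : ℤ := if e ∈ m then 1 else 0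

lemma E0_ne_E1 (n b n' b' : ℤ) : E0 n b ≠ E1 n' b' := by
  intro h
  rw [E0, E1, Sym2.eq_iff] at h
  rcases h with ⟨h1, h2⟩ | ⟨h1, h2⟩
  · exact Wv_ne_Bk _ _ _ _ h1.symm
  · obtain ⟨ha, hb⟩ := Bk_inj h1; obtain ⟨hc, hd⟩ := Wv_inj h2; omega

lemma E0_ne_E2 (n b n' b' : ℤ) : E0 n b ≠ E2 n' b' := by
  intro h
  rw [E0, E2, Sym2.eq_iff] at h
  rcases h with ⟨h1, h2⟩ | ⟨h1, h2⟩
  · obtain ⟨ha, hb⟩ := Bk_inj h1; obtain ⟨hc, hd⟩ := Wv_inj h2; omega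
  · exact Wv_ne_Bk _ _ _ _ h2

lemma E1_ne_E2 (n b n' b' : ℤ) : E1 n b ≠ E2 n' b' := by
  intro h
  rw [E1, E2, Sym2.eq_iff] at h
  rcases h with ⟨h1, h2⟩ | ⟨h1, h2⟩
  · exact Wv_ne_Bk _ _ _ _ h1
  · obtain ⟨ha, hb⟩ := Wv_inj h1; obtain ⟨hc, hd⟩ := Bk_inj h2; omega

/-- Indicator counting from `ncard = 1`. -/
lemma indicator_sum_one {x y z : Sym2 ℂ} {m : Set (Sym2 ℂ)}
    (hxy : x ≠ y) (hxz : x ≠ z) (hyz : y ≠ z)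
    (h : ({e | e ∈ m ∧ (e = x ∨ e = y ∨ e = z)} : Set (Sym2 ℂ)).ncard = 1) :
    ind m x + ind m y + ind m z = 1 := by
  classical
  by_cases hx : x ∈ m <;> by_cases hy : y ∈ m <;> by_cases hz : z ∈ m <;>
    simp only [ind, if_pos, if_neg, hx, hy, hz, if_true, if_false]
  · -- all three
    exfalso
    have hset : ({e | e ∈ m ∧ (e = x ∨ e = y ∨ e = z)} : Set (Sym2 ℂ)) = {x, y, z} := by
      ext e; constructor
      · rintro ⟨_, rfl | rfl | rfl⟩ <;> simp
      · rintro (rfl | rfl | rfl) <;> exact ⟨by assumption, by simp⟩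
    rw [hset] at h
    rw [Set.ncard_insert_of_notMem (by simp [hxy, hxz]),
      Set.ncard_insert_of_notMem (by simp [hyz]), Set.ncard_singleton] at h
    omega
  · -- x y
    exfalso
    have hset : ({e | e ∈ m ∧ (e = x ∨ e = y ∨ e = z)} : Set (Sym2 ℂ)) = {x, y} := by
      ext e; constructor
      · rintro ⟨he, rfl | rfl | rfl⟩ <;> simp_all
      · rintro (rfl | rfl) <;> exact ⟨by assumption, by simp⟩
    rw [hset, Set.ncard_pair hxy] at h; omega
  · -- x z
    exfalso
    have hset : ({e | e ∈ m ∧ (e = x ∨ e = y ∨ e = z)} : Set (Sym2 ℂ)) = {x, z} := by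
      ext e; constructor
      · rintro ⟨he, rfl | rfl | rfl⟩ <;> simp_all
      · rintro (rfl | rfl) <;> exact ⟨by assumption, by simp⟩
    rw [hset, Set.ncard_pair hxz] at h; omega
  · ring
  · -- y z
    exfalso
    have hset : ({e | e ∈ m ∧ (e = x ∨ e = y ∨ e = z)} : Set (Sym2 ℂ)) = {y, z} := by
      ext e; constructor
      · rintro ⟨he, rfl | rfl | rfl⟩ <;> simp_all
      · rintro (rfl | rfl) <;> exact ⟨by assumption, by simp⟩
    rw [hset, Set.ncard_pair hyz] at h; omega
  · ring
  · ring
  · -- none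
    exfalso
    have hset : ({e | e ∈ m ∧ (e = x ∨ e = y ∨ e = z)} : Set (Sym2 ℂ)) = ∅ := by
      ext e; constructor
      · rintro ⟨he, rfl | rfl | rfl⟩ <;> simp_all
      · rintro ⟨⟩
    rw [hset, Set.ncard_empty] at h; omega

/-- White vertex relation for a dimer configuration. -/
lemma white_rel {m : Set (Sym2 ℂ)} (hm : IsDimer m) (n b : ℤ) :
    ind m (E1 n b) + ind m (E2 (n+1) b) + ind m (E0 n b) = 1 := by
  have hdeg := hm.2 (Wv n b) (Wv_mem_verts n b)
  unfold degAt at hdeg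
  apply indicator_sum_one (E1_ne_E2 _ _ _ _) (Ne.symm (E0_ne_E1 _ _ _ _))
    (Ne.symm (E0_ne_E2 _ _ _ _))
  rw [← hdeg]
  congr 1
  ext e
  simp only [Set.mem_setOf_eq, Set.mem_sep_iff]
  constructor
  · rintro ⟨he, h1 | h1 | h1⟩ <;> subst h1 <;>
      exact ⟨he, by first | exact Wv_mem_E1 n b | exact Wv_mem_E2 n b | exact Wv_mem_E0 n b⟩
  · rintro ⟨he, hv⟩
    exact ⟨he, white_nbrs (hm.1 he) hv⟩

/-- Black vertex relation for a dimer configuration. -/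
lemma black_rel {m : Set (Sym2 ℂ)} (hm : IsDimer m) (n b : ℤ) :
    ind m (E1 n b) + ind m (E2 n b) + ind m (E0 (n-1) (b+1)) = 1 := by
  have hdeg := hm.2 (Bk n b) (Bk_mem_verts n b)
  unfold degAt at hdeg
  apply indicator_sum_one (E1_ne_E2 _ _ _ _) (Ne.symm (E0_ne_E1 _ _ _ _))
    (Ne.symm (E0_ne_E2 _ _ _ _))
  rw [← hdeg]
  congr 1
  ext e
  simp only [Set.mem_setOf_eq, Set.mem_sep_iff]
  constructor
  · rintro ⟨he, h1 | h1 | h1⟩ <;> subst h1 <;>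
      exact ⟨he, by first | exact Bk_mem_E1 n b | exact Bk_mem_E2 n b | exact Bk_mem_E0 n b⟩
  · rintro ⟨he, hv⟩
    exact ⟨he, black_nbrs (hm.1 he) hv⟩
/-- Telescoping sum over `ℤ`. -/
def S (g : ℤ → ℤ) (n : ℤ) : ℤ :=
  (∑ i ∈ Finset.Ico (0:ℤ) n, g i) - ∑ i ∈ Finset.Ico n (0:ℤ), g i

lemma S_zero (g : ℤ → ℤ) : S g 0 = 0 := by simp [S]

lemma S_succ (g : ℤ → ℤ) (n : ℤ) : S g (n+1) = S g n + g n := by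
  unfold S
  rcases le_or_gt 0 n with h | h
  · have hins : Finset.Ico (0:ℤ) (n+1) = insert n (Finset.Ico (0:ℤ) n) := by
      ext x; simp only [Finset.mem_Ico, Finset.mem_insert]; omega
    rw [hins, Finset.sum_insert (by simp),
      Finset.Ico_eq_empty (a := n+1) (b := (0:ℤ)) (by omega),
      Finset.Ico_eq_empty (a := n) (b := (0:ℤ)) (by omega)]
    simp only [Finset.sum_empty]; ring
  · have hins : Finset.Ico n (0:ℤ) = insert n (Finset.Ico (n+1) (0:ℤ)) := by
      ext x; simp only [Finset.mem_Ico, Finset.mem_insert]; omega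
    rw [hins, Finset.sum_insert (by simp),
      Finset.Ico_eq_empty (a := (0:ℤ)) (b := n + 1) (by omega),
      Finset.Ico_eq_empty (a := (0:ℤ)) (b := n) (by omega)]
    simp only [Finset.sum_empty]; ring

def dAf (m : Set (Sym2 ℂ)) (n b : ℤ) : ℤ := 1 - 3 * ind m (E0 n b)
def dBf (m : Set (Sym2 ℂ)) (n b : ℤ) : ℤ := -1 + 3 * ind m (E1 n b)
def dCf (m : Set (Sym2 ℂ)) (n b : ℤ) : ℤ := 1 - 3 * ind m (E2 n b)

/-- The height function on coordinates. -/
def H (m : Set (Sym2 ℂ)) (n b : ℤ) : ℤ :=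
  S (fun i => dAf m i 0) n + S (fun j => dBf m n j) b

lemma H_zero (m : Set (Sym2 ℂ)) : H m 0 0 = 0 := by simp [H, S_zero]

lemma H_step_B (m : Set (Sym2 ℂ)) (n b : ℤ) : H m n (b+1) = H m n b + dBf m n b := by
  unfold H; rw [S_succ]; ring

lemma black_rel' {m : Set (Sym2 ℂ)} (hm : IsDimer m) (n b : ℤ) :
    ind m (E1 (n+1) b) + ind m (E2 (n+1) b) + ind m (E0 n (b+1)) = 1 := by
  have := black_rel hm (n+1) b
  rwa [show n + 1 - 1 = n by ring] at this

lemma dA_step {m : Set (Sym2 ℂ)} (hm : IsDimer m) (n b : ℤ) :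
    dAf m n (b+1) = dAf m n b + dBf m (n+1) b - dBf m n b := by
  have hw := white_rel hm n b
  have hb := black_rel' hm n b
  unfold dAf dBf; linarith

lemma H_step_A {m : Set (Sym2 ℂ)} (hm : IsDimer m) (n b : ℤ) :
    H m (n+1) b = H m n b + dAf m n b := by
  unfold H
  rw [S_succ]
  have key : ∀ c : ℤ, S (fun j => dBf m (n+1) j) c - S (fun j => dBf m n j) c
      = dAf m n c - dAf m n 0 := by
    intro c
    induction c using Int.induction_on with
    | zero => simp [S_zero]
    | succ k ih =>
        rw [S_succ, S_succ]
        have := dA_step hm n k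
        push_cast at ih ⊢
        linarith
    | pred k ih =>
        have e1 := S_succ (fun j => dBf m (n+1) j) (-(k:ℤ) - 1)
        have e2 := S_succ (fun j => dBf m n j) (-(k:ℤ) - 1)
        rw [show -(k:ℤ) - 1 + 1 = -(k:ℤ) by ring] at e1 e2
        have e3 := dA_step hm n (-(k:ℤ) - 1)
        rw [show -(k:ℤ) - 1 + 1 = -(k:ℤ) by ring] at e3
        push_cast at ih ⊢
        linarith
  have := key b
  linarith

lemma H_step_C {m : Set (Sym2 ℂ)} (hm : IsDimer m) (n b : ℤ) :
    H m (n-1) (b+1) = H m n b + dCf m n b := by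
  have h1 := H_step_B m (n-1) b
  have h2 := H_step_A hm (n-1) b
  rw [show n - 1 + 1 = n by ring] at h2
  have hw := white_rel hm (n-1) b
  rw [show n - 1 + 1 = n by ring] at hw
  simp only [dAf, dBf, dCf] at h1 h2 hw ⊢
  linarith

/-- Coordinates of a face. -/
def coords (z : ℂ) : ℤ × ℤ :=
  if h : ∃ p : ℤ × ℤ, z = Fc p.1 p.2 then h.choose else (0, 0)

lemma coords_Fc (n b : ℤ) : coords (Fc n b) = (n, b) := by
  unfold coords
  have h : ∃ p : ℤ × ℤ, Fc n b = Fc p.1 p.2 := ⟨(n, b), rfl⟩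
  rw [dif_pos h]
  obtain ⟨h1, h2⟩ := Fc_inj h.choose_spec
  rw [Prod.ext_iff]
  exact ⟨h1.symm, h2.symm⟩

/-- The height function on the plane. -/
def hfun (m : Set (Sym2 ℂ)) (z : ℂ) : ℤ := H m (coords z).1 (coords z).2

lemma hfun_Fc (m : Set (Sym2 ℂ)) (n b : ℤ) : hfun m (Fc n b) = H m n b := by
  rw [hfun, coords_Fc]

lemma hfun_zero (m : Set (Sym2 ℂ)) : hfun m 0 = 0 := by
  rw [← Fc_zero, hfun_Fc, H_zero]
lemma adj_classify {n b n' b' : ℤ} (h : ‖Fc n b - Fc n' b'‖ = 1) :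
    (n' = n + 1 ∧ b' = b) ∨ (n' = n ∧ b' = b + 1) ∨ (n' = n - 1 ∧ b' = b + 1) ∨
    (n' = n - 1 ∧ b' = b) ∨ (n' = n ∧ b' = b - 1) ∨ (n' = n + 1 ∧ b' = b - 1) := by
  unfold Fc at h
  rw [Lam_sub, abs_Lam_one_iff] at h
  have hz : (2*(n - n') + (b - b'))^2 + 3*(b - b')^2 = 4 := by
    have : (((2*(n - n') + (b - b'))^2 + 3*(b - b')^2 : ℤ) : ℚ) = ((4:ℤ):ℚ) := by
      push_cast; linear_combination 4*h
    exact_mod_cast this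
  set i := n - n' with hi
  set j := b - b' with hjd
  have h1 : 3*j^2 ≤ 4 := by linarith [sq_nonneg (2*i + j)]
  have hj0 : -7 ≤ 6*j := by linarith [sq_nonneg (j+1)]
  have hj1 : 6*j ≤ 7 := by linarith [sq_nonneg (j-1)]
  have hj0' : -1 ≤ j := by omega
  have hj1' : j ≤ 1 := by omega
  interval_cases j
  · have h4 : i * (i - 1) = 0 := by linarith [hz]
    rcases mul_eq_zero.mp h4 with h5 | h5 <;> omega
  · have h4 : i * i = 1 := by linarith [hz]
    have h5 : i = 1 ∨ i = -1 := by
      rcases Int.isUnit_iff.mp (IsUnit.of_mul_eq_one (a := i) i h4) with h6 | h6 <;>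
        [exact Or.inl h6; exact Or.inr h6]
    rcases h5 with h5 | h5 <;> omega
  · have h4 : i * (i + 1) = 0 := by linarith [hz]
    rcases mul_eq_zero.mp h4 with h5 | h5 <;> omega

/- The three step lemmas forced by the height rule. -/
lemma step0 {m : Set (Sym2 ℂ)} {h : ℂ → ℤ} (hh : heightRule m h) (n b : ℤ) :
    h (Fc (n+1) b) - h (Fc n b) = 1 - 3 * ind m (E0 n b) := by
  have hmain := hh.2 (Fc n b) (Fc (n+1) b) (Fc_mem n b) (Fc_mem _ _) (adj_E n b)
    (E0 n b) (E0_mem_sides n b)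
  have hv : (Real.sqrt 3 : ℂ)⁻¹ * (Fc n b * Complex.exp (Complex.I * Real.pi / 6) +
      Fc (n+1) b * Complex.exp (-(Complex.I * Real.pi) / 6)) = Bk (n+1) (b-1) := by
    unfold Fc
    rw [vertexExpr_eq]
    unfold Bk
    congr 1 <;> push_cast <;> ring
  rw [hv] at hmain
  have := hmain.1 (Bk_mem _ _)
  simpa [ind] using this

lemma step1 {m : Set (Sym2 ℂ)} {h : ℂ → ℤ} (hh : heightRule m h) (n b : ℤ) :
    h (Fc n (b+1)) - h (Fc n b) = -1 + 3 * ind m (E1 n b) := by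
  have hmain := hh.2 (Fc n b) (Fc n (b+1)) (Fc_mem n b) (Fc_mem _ _) (adj_NE n b)
    (E1 n b) (E1_mem_sides n b)
  have hv : (Real.sqrt 3 : ℂ)⁻¹ * (Fc n b * Complex.exp (Complex.I * Real.pi / 6) +
      Fc n (b+1) * Complex.exp (-(Complex.I * Real.pi) / 6)) = Wv n b := by
    unfold Fc
    rw [vertexExpr_eq]
    unfold Wv
    congr 1 <;> push_cast <;> ring
  rw [hv] at hmain
  have := hmain.2 (Wv_mem _ _)
  simpa [ind] using this

lemma step2 {m : Set (Sym2 ℂ)} {h : ℂ → ℤ} (hh : heightRule m h) (n b : ℤ) :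
    h (Fc (n-1) (b+1)) - h (Fc n b) = 1 - 3 * ind m (E2 n b) := by
  have hmain := hh.2 (Fc n b) (Fc (n-1) (b+1)) (Fc_mem n b) (Fc_mem _ _) (adj_NW n b)
    (E2 n b) (E2_mem_sides n b)
  have hv : (Real.sqrt 3 : ℂ)⁻¹ * (Fc n b * Complex.exp (Complex.I * Real.pi / 6) +
      Fc (n-1) (b+1) * Complex.exp (-(Complex.I * Real.pi) / 6)) = Bk n b := by
    unfold Fc
    rw [vertexExpr_eq]
    unfold Bk
    congr 1 <;> push_cast <;> ring
  rw [hv] at hmain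
  have := hmain.1 (Bk_mem _ _)
  simpa [ind] using this

/-- Existence: `hfun m` satisfies the height rule. -/
lemma hfun_rule {m : Set (Sym2 ℂ)} (hm : IsDimer m) : heightRule m (hfun m) := by
  constructor
  · exact hfun_zero m
  · intro f g hf hg hadj e he
    obtain ⟨n, b, rfl⟩ := (mem_HexFaces_iff f).mp hf
    obtain ⟨n', b', rfl⟩ := (mem_HexFaces_iff g).mp hg
    rcases adj_classify hadj with ⟨h1, h2⟩ | ⟨h1, h2⟩ | ⟨h1, h2⟩ | ⟨h1, h2⟩ |
      ⟨h1, h2⟩ | ⟨h1, h2⟩ <;> rw [h1, h2] at he ⊢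
    · -- east
      have he0 : e = E0 n b := sides_unique0 n b he
      subst he0
      have hv : (Real.sqrt 3 : ℂ)⁻¹ * (Fc n b * Complex.exp (Complex.I * Real.pi / 6) +
          Fc (n+1) b * Complex.exp (-(Complex.I * Real.pi) / 6)) = Bk (n+1) (b-1) := by
        unfold Fc; rw [vertexExpr_eq]; unfold Bk; congr 1 <;> push_cast <;> ring
      rw [hv]
      constructor
      · intro _
        rw [hfun_Fc, hfun_Fc, H_step_A hm n b]
        simp only [dAf, ind]
        ring
      · intro hw; exact (WV_disj_BV hw (Bk_mem _ _)).elim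
    · -- north-east
      have he0 : e = E1 n b := sides_unique1 n b he
      subst he0
      have hv : (Real.sqrt 3 : ℂ)⁻¹ * (Fc n b * Complex.exp (Complex.I * Real.pi / 6) +
          Fc n (b+1) * Complex.exp (-(Complex.I * Real.pi) / 6)) = Wv n b := by
        unfold Fc; rw [vertexExpr_eq]; unfold Wv; congr 1 <;> push_cast <;> ring
      rw [hv]
      constructor
      · intro hb; exact (WV_disj_BV (Wv_mem _ _) hb).elim
      · intro _
        rw [hfun_Fc, hfun_Fc, H_step_B m n b]
        simp only [dBf, ind]
        ring
    · -- north-west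
      have he0 : e = E2 n b := sides_unique2 n b he
      subst he0
      have hv : (Real.sqrt 3 : ℂ)⁻¹ * (Fc n b * Complex.exp (Complex.I * Real.pi / 6) +
          Fc (n-1) (b+1) * Complex.exp (-(Complex.I * Real.pi) / 6)) = Bk n b := by
        unfold Fc; rw [vertexExpr_eq]; unfold Bk; congr 1 <;> push_cast <;> ring
      rw [hv]
      constructor
      · intro _
        rw [hfun_Fc, hfun_Fc, H_step_C hm n b]
        simp only [dCf, ind]
        ring
      · intro hw; exact (WV_disj_BV hw (Bk_mem _ _)).elim
    · -- west
      have he' : e ∈ faceSides (Fc (n-1) b) ∩ faceSides (Fc (n-1+1) b) := by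
        rw [show n-1+1 = n by ring]; exact ⟨he.2, he.1⟩
      have he0 : e = E0 (n-1) b := sides_unique0 (n-1) b he'
      subst he0
      have hv : (Real.sqrt 3 : ℂ)⁻¹ * (Fc n b * Complex.exp (Complex.I * Real.pi / 6) +
          Fc (n-1) b * Complex.exp (-(Complex.I * Real.pi) / 6)) = Wv (n-1) b := by
        unfold Fc; rw [vertexExpr_eq]; unfold Wv; congr 1 <;> push_cast <;> ring
      rw [hv]
      constructor
      · intro hb; exact (WV_disj_BV (Wv_mem _ _) hb).elim
      · intro _
        have h2 := H_step_A hm (n-1) b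
        rw [show n-1+1 = n by ring] at h2
        rw [hfun_Fc, hfun_Fc]
        simp only [dAf, ind] at h2
        linarith
    · -- south-west
      have he' : e ∈ faceSides (Fc n (b-1)) ∩ faceSides (Fc n (b-1+1)) := by
        rw [show b-1+1 = b by ring]; exact ⟨he.2, he.1⟩
      have he0 : e = E1 n (b-1) := sides_unique1 n (b-1) he'
      subst he0
      have hv : (Real.sqrt 3 : ℂ)⁻¹ * (Fc n b * Complex.exp (Complex.I * Real.pi / 6) +
          Fc n (b-1) * Complex.exp (-(Complex.I * Real.pi) / 6)) = Bk n (b-1) := by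
        unfold Fc; rw [vertexExpr_eq]; unfold Bk; congr 1 <;> push_cast <;> ring
      rw [hv]
      constructor
      · intro _
        have h2 := H_step_B m n (b-1)
        rw [show b-1+1 = b by ring] at h2
        rw [hfun_Fc, hfun_Fc]
        simp only [dBf, ind] at h2
        linarith
      · intro hw; exact (WV_disj_BV hw (Bk_mem _ _)).elim
    · -- south-east
      have he' : e ∈ faceSides (Fc (n+1) (b-1)) ∩ faceSides (Fc (n+1-1) (b-1+1)) := by
        rw [show n+1-1 = n by ring, show b-1+1 = b by ring]; exact ⟨he.2, he.1⟩
      have he0 : e = E2 (n+1) (b-1) := sides_unique2 (n+1) (b-1) he'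
      subst he0
      have hv : (Real.sqrt 3 : ℂ)⁻¹ * (Fc n b * Complex.exp (Complex.I * Real.pi / 6) +
          Fc (n+1) (b-1) * Complex.exp (-(Complex.I * Real.pi) / 6)) = Wv n (b-1) := by
        unfold Fc; rw [vertexExpr_eq]; unfold Wv; congr 1 <;> push_cast <;> ring
      rw [hv]
      constructor
      · intro hb; exact (WV_disj_BV (Wv_mem _ _) hb).elim
      · intro _
        have h2 := H_step_C hm (n+1) (b-1)
        rw [show n+1-1 = n by ring, show b-1+1 = b by ring] at h2
        rw [hfun_Fc, hfun_Fc]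
        simp only [dCf, ind] at h2
        linarith

/-- Uniqueness of the height function on faces. -/
lemma hfun_unique {m : Set (Sym2 ℂ)} (hm : IsDimer m) {h' : ℂ → ℤ}
    (hh' : heightRule m h') : ∀ f ∈ HexFaces, h' f = hfun m f := by
  have row : ∀ n : ℤ, h' (Fc n 0) = H m n 0 := by
    intro n
    induction n using Int.induction_on with
    | zero => rw [Fc_zero, hh'.1, H_zero]
    | succ k ih =>
        have h1 := step0 hh' k 0
        have h2 := H_step_A hm k 0
        simp only [dAf] at h2
        linarith
    | pred k ih =>
        have h1 := step0 hh' (-(k:ℤ)-1) 0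
        have h2 := H_step_A hm (-(k:ℤ)-1) 0
        rw [show -(k:ℤ)-1+1 = -(k:ℤ) by ring] at h1 h2
        simp only [dAf] at h2
        linarith
  intro f hf
  obtain ⟨n, b, rfl⟩ := (mem_HexFaces_iff f).mp hf
  rw [hfun_Fc]
  clear hf
  induction b using Int.induction_on with
  | zero => exact row n
  | succ k ih =>
      have h1 := step1 hh' n k
      have h2 := H_step_B m n k
      simp only [dBf] at h2
      linarith
  | pred k ih =>
      have h1 := step1 hh' n (-(k:ℤ)-1)
      have h2 := H_step_B m n (-(k:ℤ)-1)
      rw [show -(k:ℤ)-1+1 = -(k:ℤ) by ring] at h1 h2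
      simp only [dBf] at h2
      linarith

lemma edge_classify {e : Sym2 ℂ} (he : e ∈ HexEdges) :
    ∃ n b : ℤ, e = E0 n b ∨ e = E1 n b ∨ e = E2 n b := by
  obtain ⟨u, v, hu, hv, huv, rfl⟩ := he
  have he' : s(u, v) ∈ HexEdges := ⟨u, v, hu, hv, huv, rfl⟩
  rcases hu with hw | hb
  · obtain ⟨N, M, rfl⟩ := (mem_WV_iff _).mp hw
    rcases white_nbrs he' (Sym2.mem_mk_left _ _) with h | h | h
    · exact ⟨N, M, Or.inr (Or.inl h)⟩
    · exact ⟨N+1, M, Or.inr (Or.inr h)⟩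
    · exact ⟨N, M, Or.inl h⟩
  · obtain ⟨N, M, rfl⟩ := (mem_BV_iff _).mp hb
    rcases black_nbrs he' (Sym2.mem_mk_left _ _) with h | h | h
    · exact ⟨N, M, Or.inr (Or.inl h)⟩
    · exact ⟨N, M, Or.inr (Or.inr h)⟩
    · exact ⟨N-1, M+1, Or.inl h⟩

lemma mem_transfer {m m' : Set (Sym2 ℂ)} {h h' : ℂ → ℤ}
    (hm : IsDimer m) (hm' : IsDimer m') (hh : heightRule m h) (hh' : heightRule m' h')
    (heq : ∀ f ∈ HexFaces, h f = h' f) : m ⊆ m' := by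
  intro e hem
  obtain ⟨n, b, hcase⟩ := edge_classify (hm.1 hem)
  have key : ind m e = ind m' e := by
    rcases hcase with rfl | rfl | rfl
    · have s1 := step0 hh n b
      have s2 := step0 hh' n b
      rw [heq _ (Fc_mem _ _), heq _ (Fc_mem _ _)] at s1
      linarith
    · have s1 := step1 hh n b
      have s2 := step1 hh' n b
      rw [heq _ (Fc_mem _ _), heq _ (Fc_mem _ _)] at s1
      linarith
    · have s1 := step2 hh n b
      have s2 := step2 hh' n b
      rw [heq _ (Fc_mem _ _), heq _ (Fc_mem _ _)] at s1
      linarith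
  simp only [ind, if_pos hem] at key
  by_contra hne
  rw [if_neg hne] at key
  norm_num at key
/-- Definition 3.8: every dimer configuration has a height function,
unique on the faces, and the map `m ↦ h_m` is injective: dimer configurations are in
bijection with their height functions. -/
theorem height_function_exists_unique_injective :
    (∀ m : Set (Sym2 ℂ), IsDimer m →
      ∃ h : ℂ → ℤ, heightRule m h ∧
        ∀ h' : ℂ → ℤ, heightRule m h' → ∀ f ∈ HexFaces, h' f = h f) ∧
    (∀ m m' : Set (Sym2 ℂ), ∀ h h' : ℂ → ℤ,
      IsDimer m → IsDimer m' → heightRule m h → heightRule m' h' →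
      (∀ f ∈ HexFaces, h f = h' f) → m = m') := by
  constructor
  · intro m hm
    exact ⟨hfun m, hfun_rule hm, fun h' hh' f hf => hfun_unique hm hh' f hf⟩
  · intro m m' h h' hm hm' hh hh' heq
    exact subset_antisymm (mem_transfer hm hm' hh hh' heq)
      (mem_transfer hm' hm hh' hh (fun f hf => (heq f hf).symm))

end HexPaper
end
end
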